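/- arXiv:2306.17607 — 5 statements merged into one kernel-verified Lean document; each statement's English description precedes it below -/
import Mathlib

section
/- For integers k ≥ 3 and l₁, l₂ ≥ 2, bgr_k(P_4 : C_{2l₁} ∪ C_{2l₂}) = k(l₁ + l₂) − k + 1. -/
open Function Finset SimpleGraph

/-- A rainbow path on 4 vertices `u₁ v₁ u₂ v₂` (middle pattern). -/
def rbP4pat {N : ℕ} {γ : Type*} (c : Fin N → Fin N → γ) : Prop :=
  ∃ u₁ u₂ v₁ v₂ : Fin N, u₁ ≠ u₂ ∧ v₁ ≠ v₂ ∧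
    c u₁ v₁ ≠ c u₂ v₁ ∧ c u₁ v₁ ≠ c u₂ v₂ ∧ c u₂ v₁ ≠ c u₂ v₂

/-- The coloring `c` of `K_{N,N}` contains a rainbow path on 4 vertices. -/
def hasRainbowP4 {N : ℕ} {γ : Type*} (c : Fin N → Fin N → γ) : Prop :=
  rbP4pat c ∨ rbP4pat (fun v u => c u v)

/-- A rainbow path on 5 vertices `u₁ v₁ u₂ v₂ u₃` (one-sided pattern). -/
def rbP5pat {N : ℕ} {γ : Type*} (c : Fin N → Fin N → γ) : Prop :=
  ∃ u₁ u₂ u₃ v₁ v₂ : Fin N, u₁ ≠ u₂ ∧ u₁ ≠ u₃ ∧ u₂ ≠ u₃ ∧ v₁ ≠ v₂ ∧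
    c u₁ v₁ ≠ c u₂ v₁ ∧ c u₁ v₁ ≠ c u₂ v₂ ∧ c u₁ v₁ ≠ c u₃ v₂ ∧
    c u₂ v₁ ≠ c u₂ v₂ ∧ c u₂ v₁ ≠ c u₃ v₂ ∧ c u₂ v₂ ≠ c u₃ v₂

/-- The coloring `c` of `K_{N,N}` contains a rainbow path on 5 vertices. -/
def hasRainbowP5 {N : ℕ} {γ : Type*} (c : Fin N → Fin N → γ) : Prop :=
  rbP5pat c ∨ rbP5pat (fun v u => c u v)

/-- The coloring `c` of `K_{N,N}` contains a rainbow star `K_{1,3}`: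
some vertex (on either side) has three incident edges with pairwise distinct colors. -/
def hasRainbowK13 {N : ℕ} {γ : Type*} (c : Fin N → Fin N → γ) : Prop :=
  (∃ u v₁ v₂ v₃ : Fin N, c u v₁ ≠ c u v₂ ∧ c u v₁ ≠ c u v₃ ∧ c u v₂ ≠ c u v₃) ∨
  (∃ v u₁ u₂ u₃ : Fin N, c u₁ v ≠ c u₂ v ∧ c u₁ v ≠ c u₃ v ∧ c u₂ v ≠ c u₃ v)

/-- The coloring `c` of `K_{N,N}` (first coordinate: side `U`, second: side `V`)
contains a monochromatic copy of the (bipartite) graph `H`. -/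
def hasMonoCopy {N : ℕ} {γ : Type*} {α : Type*} (c : Fin N → Fin N → γ)
    (H : SimpleGraph α) : Prop :=
  ∃ i : γ, ∃ f : α → Fin N ⊕ Fin N, Function.Injective f ∧
    ∀ a b, H.Adj a b → ∃ u v : Fin N, c u v = i ∧
      ((f a = Sum.inl u ∧ f b = Sum.inr v) ∨ (f a = Sum.inr v ∧ f b = Sum.inl u))

/-- The coloring `c` of `K_{N,N}` contains a monochromatic copy of `K_{s,t}`
(in either orientation with respect to the two sides). -/
def hasMonoKst {N : ℕ} {γ : Type*} (c : Fin N → Fin N → γ) (s t : ℕ) : Prop :=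
  ∃ i : γ, ∃ S T : Finset (Fin N),
    ((S.card = s ∧ T.card = t) ∨ (S.card = t ∧ T.card = s)) ∧
    ∀ u ∈ S, ∀ v ∈ T, c u v = i

/-- Disjoint union of a family of graphs, on the sigma type. -/
def sigmaUnion {ι : Type*} {β : ι → Type*} (G : ∀ i, SimpleGraph (β i)) :
    SimpleGraph (Σ i, β i) where
  Adj x y := ∃ i a b, (G i).Adj a b ∧ x = ⟨i, a⟩ ∧ y = ⟨i, b⟩
  symm := ⟨by rintro x y ⟨i, a, b, h, rfl, rfl⟩; exact ⟨i, b, a, h.symm, rfl, rfl⟩⟩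
  loopless := ⟨by
    rintro x ⟨i, a, b, h, rfl, h2⟩
    obtain rfl : a = b := by simpa using h2
    exact (G i).irrefl h⟩


/-- `n` witnesses the bipartite Gallai–Ramsey property for a rainbow `P₄`
versus a monochromatic `C_{2l₁} ∪ C_{2l₂}` with `k` colors. -/
def bgrP4CC (k l1 l2 n : ℕ) : Prop :=
  k ≤ n ^ 2 ∧ ∀ N : ℕ, n ≤ N → ∀ c : Fin N → Fin N → Fin k,
    (∀ i : Fin k, ∃ u v, c u v = i) →
    hasRainbowP4 c ∨ hasMonoCopy c (cycleGraph (2 * l1) ⊕g cycleGraph (2 * l2))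

section Aux

variable {N k : ℕ} {γ : Type*}

lemma key_lemma {c : Fin N → Fin N → γ} (hc : ¬ rbP4pat c)
    {u u' v v' : Fin N} (h1 : u ≠ u') (h2 : v ≠ v')
    (h3 : c u' v ≠ c u v) (h4 : c u' v ≠ c u v') : c u v = c u v' := by
  by_contra h5
  exact hc ⟨u', u, v, v', h1.symm, h2, h3, h4, h5⟩

lemma row3 {c : Fin N → Fin N → γ} (hc : ¬ rbP4pat c)
    {u0 va vb ve : Fin N} (hab : c u0 va ≠ c u0 vb) (hae : c u0 va ≠ c u0 ve)
    (hbe : c u0 vb ≠ c u0 ve) : ∀ u w, c u w = c u0 w := by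
  intro u w
  by_cases hu : u = u0
  · subst hu; rfl
  by_contra hne
  obtain ⟨vp, vq, hpt, hqt, hpq⟩ :
      ∃ vp vq, c u0 vp ≠ c u0 w ∧ c u0 vq ≠ c u0 w ∧ c u0 vp ≠ c u0 vq := by
    by_cases ha : c u0 va = c u0 w
    · exact ⟨vb, ve, fun hh => hab (ha.trans hh.symm), fun hh => hae (ha.trans hh.symm), hbe⟩
    · by_cases hb : c u0 vb = c u0 w
      · exact ⟨va, ve, ha, fun hh => hbe (hb.trans hh.symm), hae⟩
      · exact ⟨va, vb, ha, hb, hab⟩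
  have hwp : w ≠ vp := by rintro rfl; exact hpt rfl
  have hwq : w ≠ vq := by rintro rfl; exact hqt rfl
  have e1 : c u w = c u0 vp := by
    by_contra h
    exact hpt (key_lemma hc (fun hh => hu hh.symm) hwp hne h).symm
  have e2 : c u w = c u0 vq := by
    by_contra h
    exact hqt (key_lemma hc (fun hh => hu hh.symm) hwq hne h).symm
  exact hpq (e1.symm.trans e2)

lemma dichotomy (hk : 3 ≤ k) (c : Fin N → Fin N → Fin k)
    (hsurj : ∀ i : Fin k, ∃ u v, c u v = i) (hc : ¬ rbP4pat c) :
    (∀ u v v', c u v = c u v') ∨ (∀ u u' v, c u v = c u' v) := by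
  by_contra hcon
  push_neg at hcon
  obtain ⟨⟨u0, va, vb, hab⟩, ⟨u1, u2, w0, hw⟩⟩ := hcon
  have hvab : va ≠ vb := by rintro rfl; exact hab rfl
  obtain ⟨e, hea, heb⟩ : ∃ e : Fin k, e ≠ c u0 va ∧ e ≠ c u0 vb := by
    by_contra h
    push_neg at h
    have hsub : (Finset.univ : Finset (Fin k)) ⊆ {c u0 va, c u0 vb} := by
      intro x _
      by_cases hx : x = c u0 va
      · simp [hx]
      · simp [h x hx]
    have h2 := Finset.card_le_card hsub
    have h3 : ({c u0 va, c u0 vb} : Finset (Fin k)).card ≤ 2 :=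
      (Finset.card_insert_le _ _).trans (by simp)
    simp only [Finset.card_univ, Fintype.card_fin] at h2
    omega
  obtain ⟨us, vs, he⟩ := hsurj e
  have finish3 : ∀ ve, c u0 va ≠ c u0 ve → c u0 vb ≠ c u0 ve → False := by
    intro ve hx hy
    have hall := row3 hc hab hx hy
    exact hw ((hall u1 w0).trans (hall u2 w0).symm)
  by_cases hu : us = u0
  · subst hu
    exact finish3 vs (fun h => hea (h.trans he).symm) (fun h => heb (h.trans he).symm)
  · have hva : vs ≠ va := by
      intro hh
      apply hab
      refine key_lemma hc (fun h => hu h.symm) hvab ?_ ?_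
      · have : c us va = e := hh ▸ he
        rw [this]; exact hea
      · have : c us va = e := hh ▸ he
        rw [this]; exact heb
    have hvb : vs ≠ vb := by
      intro hh
      apply hab.symm
      refine key_lemma hc (fun h => hu h.symm) (Ne.symm hvab) ?_ ?_
      · have : c us vb = e := hh ▸ he
        rw [this]; exact heb
      · have : c us vb = e := hh ▸ he
        rw [this]; exact hea
    have ht : c u0 vs = e := by
      by_contra h
      have h' : c us vs ≠ c u0 vs := by rw [he]; exact fun hh => h hh.symm
      have e1 : c u0 vs = c u0 va :=
        key_lemma hc (fun hh => hu hh.symm) hva h' (by rw [he]; exact hea)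
      have e2 : c u0 vs = c u0 vb :=
        key_lemma hc (fun hh => hu hh.symm) hvb h' (by rw [he]; exact heb)
      exact hab (e1.symm.trans e2)
    exact finish3 vs (fun h => hea (h.trans ht).symm) (fun h => heb (h.trans ht).symm)

end Aux

lemma mod_one_case {n x : ℕ} (hx : x % n = 1) (hlt : x < 2 * n) : x = 1 ∨ x = n + 1 := by
  rcases Nat.lt_or_ge x n with hc | hc
  · left; rwa [Nat.mod_eq_of_lt hc] at hx
  · right
    rw [Nat.mod_eq_sub_mod hc, Nat.mod_eq_of_lt (by omega)] at hx
    omega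

lemma adj_parity {n : ℕ} (hn : 2 ∣ n) {u v : Fin n} (h : (cycleGraph n).Adj u v) :
    u.val % 2 ≠ v.val % 2 := by
  have hu : u.val < n := u.isLt
  have hv : v.val < n := v.isLt
  rw [cycleGraph_adj'] at h
  simp only [Fin.sub_def] at h
  rcases h with h | h
  · have := mod_one_case h (by omega)
    omega
  · have := mod_one_case h (by omega)
    omega

lemma adj_consec {n : ℕ} (hn : 2 ≤ n) {x y : Fin n} (h : y.val = x.val + 1) :
    (cycleGraph n).Adj x y := by
  rw [cycleGraph_adj']
  right
  rw [Fin.sub_def]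
  show (n - x.val + y.val) % n = 1
  have hx : x.val < n := x.isLt
  have e : n - x.val + y.val = n + 1 := by omega
  rw [e, Nat.add_mod_left, Nat.mod_eq_of_lt (by omega)]

lemma monoGrid {N k l1 l2 : ℕ} (h1 : 2 ≤ l1) (h2 : 2 ≤ l2)
    {c : Fin N → Fin N → Fin k} {i : Fin k} {S T : Finset (Fin N)}
    (hS : S.card = l1 + l2) (hT : T.card = l1 + l2)
    (hc : ∀ u ∈ S, ∀ v ∈ T, c u v = i) :
    hasMonoCopy c (cycleGraph (2 * l1) ⊕g cycleGraph (2 * l2)) := by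
  classical
  refine ⟨i, Sum.elim
    (fun j : Fin (2 * l1) => if j.val % 2 = 0
      then Sum.inl (S.orderEmbOfFin hS ⟨j.val / 2, by have := j.isLt; omega⟩)
      else Sum.inr (T.orderEmbOfFin hT ⟨j.val / 2, by have := j.isLt; omega⟩))
    (fun j : Fin (2 * l2) => if j.val % 2 = 0
      then Sum.inl (S.orderEmbOfFin hS ⟨l1 + j.val / 2, by have := j.isLt; omega⟩)
      else Sum.inr (T.orderEmbOfFin hT ⟨l1 + j.val / 2, by have := j.isLt; omega⟩)),
    ?_, ?_⟩
  · intro x y hxy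
    rcases x with j | j <;> rcases y with j' | j' <;>
        by_cases hj : j.val % 2 = 0 <;> by_cases hj' : j'.val % 2 = 0 <;>
        simp only [Sum.elim_inl, Sum.elim_inr, hj, hj', if_true, if_false, ite_true, ite_false,
          if_pos, if_neg, not_false_eq_true, Sum.inl.injEq, Sum.inr.injEq,
          EmbeddingLike.apply_eq_iff_eq, Fin.mk.injEq, reduceCtorEq] at hxy <;>
      first
      | (exact congrArg _ (Fin.ext (by omega)))
      | (exact absurd hxy (by have := j.isLt; have := j'.isLt; omega))
      | (exact absurd hxy (by simp))
  · intro a b hab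
    rcases a with j | j <;> rcases b with j' | j'
    · simp only [sum_adj] at hab
      have hpar := adj_parity ⟨l1, rfl⟩ hab
      by_cases hj : j.val % 2 = 0
      · have hj' : ¬ (j'.val % 2 = 0) := by omega
        exact ⟨_, _, hc _ (S.orderEmbOfFin_mem hS ⟨j.val / 2, by have := j.isLt; omega⟩)
          _ (T.orderEmbOfFin_mem hT ⟨j'.val / 2, by have := j'.isLt; omega⟩),
          Or.inl ⟨by simp [hj], by simp [hj']⟩⟩
      · have hj' : j'.val % 2 = 0 := by omega
        exact ⟨_, _, hc _ (S.orderEmbOfFin_mem hS ⟨j'.val / 2, by have := j'.isLt; omega⟩)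
          _ (T.orderEmbOfFin_mem hT ⟨j.val / 2, by have := j.isLt; omega⟩),
          Or.inr ⟨by simp [hj], by simp [hj']⟩⟩
    · simp only [sum_adj] at hab
    · simp only [sum_adj] at hab
    · simp only [sum_adj] at hab
      have hpar := adj_parity ⟨l2, rfl⟩ hab
      by_cases hj : j.val % 2 = 0
      · have hj' : ¬ (j'.val % 2 = 0) := by omega
        exact ⟨_, _, hc _ (S.orderEmbOfFin_mem hS ⟨l1 + j.val / 2, by have := j.isLt; omega⟩)
          _ (T.orderEmbOfFin_mem hT ⟨l1 + j'.val / 2, by have := j'.isLt; omega⟩),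
          Or.inl ⟨by simp [hj], by simp [hj']⟩⟩
      · have hj' : j'.val % 2 = 0 := by omega
        exact ⟨_, _, hc _ (S.orderEmbOfFin_mem hS ⟨l1 + j'.val / 2, by have := j'.isLt; omega⟩)
          _ (T.orderEmbOfFin_mem hT ⟨l1 + j.val / 2, by have := j.isLt; omega⟩),
          Or.inr ⟨by simp [hj], by simp [hj']⟩⟩

lemma upper_bound {k l1 l2 N : ℕ} (hk : 3 ≤ k) (h1 : 2 ≤ l1) (h2 : 2 ≤ l2)
    (hN : k * (l1 + l2 - 1) + 1 ≤ N) (c : Fin N → Fin N → Fin k)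
    (hsurj : ∀ i : Fin k, ∃ u v, c u v = i) :
    hasRainbowP4 c ∨ hasMonoCopy c (cycleGraph (2 * l1) ⊕g cycleGraph (2 * l2)) := by
  by_cases hr : hasRainbowP4 c
  · exact Or.inl hr
  right
  have hc : ¬ rbP4pat c := fun h => hr (Or.inl h)
  have hNpos : 0 < N := by omega
  have hNbig : l1 + l2 ≤ N := by
    have hle : l1 + l2 - 1 ≤ k * (l1 + l2 - 1) :=
      Nat.le_mul_of_pos_left _ (by omega)
    omega
  have hTex : ∃ T : Finset (Fin N), T ⊆ univ ∧ T.card = l1 + l2 :=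
    Finset.exists_subset_card_eq (by simpa using hNbig)
  obtain ⟨T0, -, hT0⟩ := hTex
  rcases dichotomy hk c hsurj hc with hrow | hcol
  · -- rows monochromatic
    obtain ⟨i, -, hi⟩ := Finset.exists_lt_card_fiber_of_mul_lt_card_of_maps_to
      (s := (univ : Finset (Fin N))) (t := (univ : Finset (Fin k)))
      (f := fun u : Fin N => c u ⟨0, hNpos⟩) (n := l1 + l2 - 1)
      (fun a _ => Finset.mem_univ _) (by simpa using hN)
    obtain ⟨S, hSsub, hScard⟩ := Finset.exists_subset_card_eq
      (s := univ.filter (fun u : Fin N => c u ⟨0, hNpos⟩ = i)) (n := l1 + l2) (by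
        have := hi
        omega)
    refine monoGrid (i := i) h1 h2 hScard hT0 ?_
    intro u hu v hv
    have hu' := hSsub hu
    simp only [Finset.mem_filter] at hu'
    exact (hrow u v ⟨0, hNpos⟩).trans hu'.2
  · -- columns monochromatic
    obtain ⟨i, -, hi⟩ := Finset.exists_lt_card_fiber_of_mul_lt_card_of_maps_to
      (s := (univ : Finset (Fin N))) (t := (univ : Finset (Fin k)))
      (f := fun v : Fin N => c ⟨0, hNpos⟩ v) (n := l1 + l2 - 1)
      (fun a _ => Finset.mem_univ _) (by simpa using hN)
    obtain ⟨T, hTsub, hTcard⟩ := Finset.exists_subset_card_eq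
      (s := univ.filter (fun v : Fin N => c ⟨0, hNpos⟩ v = i)) (n := l1 + l2) (by
        have := hi
        omega)
    refine monoGrid (i := i) h1 h2 hT0 hTcard ?_
    intro u hu v hv
    have hv' := hTsub hv
    simp only [Finset.mem_filter] at hv'
    exact (hcol u ⟨0, hNpos⟩ v).trans hv'.2

/-- The lower-bound construction: block coloring by rows has no rainbow P4 and
no monochromatic copy of the two cycles. -/
lemma lower_bound {k l1 l2 : ℕ} (hk : 3 ≤ k) (h1 : 2 ≤ l1) (h2 : 2 ≤ l2)
    (m : ℕ) (hm : bgrP4CC k l1 l2 m) : k * (l1 + l2) - k + 1 ≤ m := by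
  by_contra hlt
  push_neg at hlt
  have hmul : k * (l1 + l2) = k * (l1 + l2 - 1) + k := by
    have he : l1 + l2 - 1 + 1 = l1 + l2 := by omega
    calc k * (l1 + l2) = k * (l1 + l2 - 1 + 1) := by rw [he]
      _ = k * (l1 + l2 - 1) + k := by ring
  set s := l1 + l2 - 1 with hsdef
  have hs : 3 ≤ s := by omega
  have hmN : m ≤ k * s := by omega
  have hblock : ∀ u : Fin (k * s), u.val / s < k := by
    intro u
    exact (Nat.div_lt_iff_lt_mul (by omega)).mpr (by have := u.isLt; omega)
  set c : Fin (k * s) → Fin (k * s) → Fin k :=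
    (fun u _ => ⟨u.val / s, hblock u⟩) with hcdef
  have hks : 0 < k * s := by positivity
  have hsurjc : ∀ i : Fin k, ∃ u v, c u v = i := by
    intro i
    have hlt' : i.val * s < k * s :=
      Nat.mul_lt_mul_of_lt_of_le i.isLt (le_refl s) (by omega)
    refine ⟨⟨i.val * s, hlt'⟩, ⟨0, hks⟩, ?_⟩
    simp only [hcdef]
    exact Fin.ext (by simp [Nat.mul_div_cancel _ (show 0 < s by omega)])
  rcases hm.2 (k * s) hmN c hsurjc with hr | hmono
  · rcases hr with ⟨u1, u2, v1, v2, _, _, _, _, h5⟩ | ⟨u1, u2, v1, v2, _, _, h3, _, _⟩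
    · exact h5 rfl
    · exact h3 rfl
  · obtain ⟨i, f, hinj, hedge⟩ := hmono
    -- for each j : Fin l1, one of the endpoints of edge (2j, 2j+1) of the first
    -- cycle is mapped to a left vertex in block i
    have key1 : ∀ j : Fin l1, ∃ u : Fin (k * s), u.val / s = i.val ∧
        (f (Sum.inl ⟨2 * j.val, by have := j.isLt; omega⟩) = Sum.inl u ∨
         f (Sum.inl ⟨2 * j.val + 1, by have := j.isLt; omega⟩) = Sum.inl u) := by
      intro j
      have hadj : (cycleGraph (2 * l1) ⊕g cycleGraph (2 * l2)).Adj
          (Sum.inl ⟨2 * j.val, by have := j.isLt; omega⟩)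
          (Sum.inl ⟨2 * j.val + 1, by have := j.isLt; omega⟩) := by
        simp only [sum_adj]
        exact adj_consec (by omega) rfl
      obtain ⟨u, v, hcuv, hor⟩ := hedge _ _ hadj
      refine ⟨u, ?_, ?_⟩
      · have : (⟨u.val / s, hblock u⟩ : Fin k) = i := hcuv
        exact congrArg Fin.val this
      · rcases hor with ⟨h, -⟩ | ⟨-, h⟩
        · exact Or.inl h
        · exact Or.inr h
    have key2 : ∀ j : Fin l2, ∃ u : Fin (k * s), u.val / s = i.val ∧
        (f (Sum.inr ⟨2 * j.val, by have := j.isLt; omega⟩) = Sum.inl u ∨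
         f (Sum.inr ⟨2 * j.val + 1, by have := j.isLt; omega⟩) = Sum.inl u) := by
      intro j
      have hadj : (cycleGraph (2 * l1) ⊕g cycleGraph (2 * l2)).Adj
          (Sum.inr ⟨2 * j.val, by have := j.isLt; omega⟩)
          (Sum.inr ⟨2 * j.val + 1, by have := j.isLt; omega⟩) := by
        simp only [sum_adj]
        exact adj_consec (by omega) rfl
      obtain ⟨u, v, hcuv, hor⟩ := hedge _ _ hadj
      refine ⟨u, ?_, ?_⟩
      · have : (⟨u.val / s, hblock u⟩ : Fin k) = i := hcuv
        exact congrArg Fin.val this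
      · rcases hor with ⟨h, -⟩ | ⟨-, h⟩
        · exact Or.inl h
        · exact Or.inr h
    choose g1 hg1i hg1 using key1
    choose g2 hg2i hg2 using key2
    have hΦinj : Function.Injective (Sum.elim g1 g2) := by
      intro x y hxy
      rcases x with j | j <;> rcases y with j' | j' <;>
          simp only [Sum.elim_inl, Sum.elim_inr] at hxy
      · rcases hg1 j with h | h <;> rcases hg1 j' with h' | h' <;>
          rw [hxy] at h <;>
          have := hinj (h.trans h'.symm) <;>
          simp only [Sum.inl.injEq, Fin.mk.injEq] at this <;>
          exact congrArg _ (Fin.ext (by omega))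
      · exfalso
        rcases hg1 j with h | h <;> rcases hg2 j' with h' | h' <;>
          rw [hxy] at h <;>
          exact absurd (hinj (h.trans h'.symm)) (by simp)
      · exfalso
        rcases hg2 j with h | h <;> rcases hg1 j' with h' | h' <;>
          rw [hxy] at h <;>
          exact absurd (hinj (h.trans h'.symm)) (by simp)
      · rcases hg2 j with h | h <;> rcases hg2 j' with h' | h' <;>
          rw [hxy] at h <;>
          have := hinj (h.trans h'.symm) <;>
          simp only [Sum.inr.injEq, Fin.mk.injEq] at this <;>
          exact congrArg _ (Fin.ext (by omega))
    have hmaps : ∀ x ∈ (univ : Finset (Fin l1 ⊕ Fin l2)),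
        Sum.elim g1 g2 x ∈ univ.filter (fun u : Fin (k * s) => u.val / s = i.val) := by
      intro x _
      rcases x with j | j
      · exact Finset.mem_filter.mpr ⟨Finset.mem_univ _, hg1i j⟩
      · exact Finset.mem_filter.mpr ⟨Finset.mem_univ _, hg2i j⟩
    have hcard1 : (univ : Finset (Fin l1 ⊕ Fin l2)).card ≤
        (univ.filter (fun u : Fin (k * s) => u.val / s = i.val)).card :=
      Finset.card_le_card_of_injOn _ hmaps hΦinj.injOn
    have hcard2 : (univ.filter (fun u : Fin (k * s) => u.val / s = i.val)).card ≤ s := by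
      have hmem : ∀ u ∈ univ.filter (fun u : Fin (k * s) => u.val / s = i.val),
          u.val - i.val * s ∈ Finset.range s := by
        intro u hu
        simp only [Finset.mem_filter, Finset.mem_univ, true_and] at hu
        have hle : i.val * s ≤ u.val := by
          have := Nat.div_mul_le_self u.val s
          rw [hu] at this
          exact this
        have hlt2 : u.val < (i.val + 1) * s := by
          refine (Nat.div_lt_iff_lt_mul (show 0 < s by omega)).mp ?_
          rw [hu]; omega
        have hexp : (i.val + 1) * s = i.val * s + s := by ring
        exact Finset.mem_range.mpr (by omega)
      have hinj2 : Set.InjOn (fun u : Fin (k * s) => u.val - i.val * s)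
          (univ.filter (fun u : Fin (k * s) => u.val / s = i.val)) := by
        intro u hu v hv huv
        simp only [Finset.coe_filter, Set.mem_setOf_eq] at hu hv
        have hle1 : i.val * s ≤ u.val := by
          have := Nat.div_mul_le_self u.val s
          rw [hu.2] at this; exact this
        have hle2 : i.val * s ≤ v.val := by
          have := Nat.div_mul_le_self v.val s
          rw [hv.2] at this; exact this
        exact Fin.ext (by simp only at huv; omega)
      calc (univ.filter (fun u : Fin (k * s) => u.val / s = i.val)).card
          ≤ (Finset.range s).card := Finset.card_le_card_of_injOn _ hmem hinj2
        _ = s := Finset.card_range s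
    have hcu : (univ : Finset (Fin l1 ⊕ Fin l2)).card = l1 + l2 := by simp
    omega

/-- for `k ≥ 3`, `l₁, l₂ ≥ 2`,
`bgr_k(P₄ : C_{2l₁} ∪ C_{2l₂}) = k(l₁+l₂) − k + 1`. -/
theorem stmt6 (k l1 l2 : ℕ) (hk : 3 ≤ k) (h1 : 2 ≤ l1) (h2 : 2 ≤ l2) :
    bgrP4CC k l1 l2 (k * (l1 + l2) - k + 1) ∧
    (∀ m : ℕ, bgrP4CC k l1 l2 m → k * (l1 + l2) - k + 1 ≤ m) := by
  have hmul : k * (l1 + l2) = k * (l1 + l2 - 1) + k := by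
    have he : l1 + l2 - 1 + 1 = l1 + l2 := by omega
    calc k * (l1 + l2) = k * (l1 + l2 - 1 + 1) := by rw [he]
      _ = k * (l1 + l2 - 1) + k := by ring
  have heq : k * (l1 + l2) - k + 1 = k * (l1 + l2 - 1) + 1 := by omega
  refine ⟨⟨?_, ?_⟩, fun m hm => lower_bound hk h1 h2 m hm⟩
  · -- k ≤ n ^ 2
    rw [heq]
    have hk1 : k ≤ k * (l1 + l2 - 1) := by
      calc k = k * 1 := (mul_one k).symm
        _ ≤ k * (l1 + l2 - 1) := Nat.mul_le_mul_left k (by omega)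
    have hps : k * (l1 + l2 - 1) + 1 ≤ (k * (l1 + l2 - 1) + 1) ^ 2 :=
      Nat.le_self_pow (by norm_num) _
    omega
  · intro N hN c hsurj
    rw [heq] at hN
    exact upper_bound hk h1 h2 hN c hsurj
end

section
/- For integers k ≥ 4, l ≥ 10, r ≥ 1, let n = kr⌊l/2⌋ − k. There is an edge-coloring of K_{n,n} = G(U,V) with exactly k colors containing no rainbow path P_5 on 5 vertices and no monochromatic copy of r disjoint copies of P_l. Namely, partition V into k parts V_1,…,V_k of size r⌊l/2⌋ − 1 and color all edges from U to V_i with color i. -/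
open Function Finset SimpleGraph

/-- `r` vertex-disjoint copies of the path on `l` vertices. -/
def manyPaths (r l : ℕ) : SimpleGraph (Σ _ : Fin r, Fin l) :=
  sigmaUnion (fun _ : Fin r => pathGraph l)

/-- for `k ≥ 4`, `l ≥ 10`, `r ≥ 1` and `n = kr⌊l/2⌋ − k`, partitioning
`V` into `k` parts of size `r⌊l/2⌋ − 1` and coloring all edges from `U` to `V_i`
with color `i` yields an exact `k`-coloring of `K_{n,n}` with no rainbow `P₅` and no
monochromatic `rP_l`. -/
theorem stmt9 (k r l : ℕ) (hk : 4 ≤ k) (hl : 10 ≤ l) (hr : 1 ≤ r) :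
    ∃ p : Fin (k * r * (l / 2) - k) → Fin k,
      (∀ i : Fin k, (Finset.univ.filter (fun v => p v = i)).card = r * (l / 2) - 1) ∧
      ¬ hasRainbowP5 (fun (_ v : Fin (k * r * (l / 2) - k)) => p v) ∧
      ¬ hasMonoCopy (fun (_ v : Fin (k * r * (l / 2) - k)) => p v) (manyPaths r l) := by
  have hq5 : 5 ≤ l / 2 := by omega
  set q := l / 2 with hq
  set m := r * q - 1 with hmdef
  have hrq : 5 ≤ r * q := le_trans hq5 (Nat.le_mul_of_pos_left q hr)
  have hm4 : 4 ≤ m := by omega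
  have hm0 : 0 < m := by omega
  set N := k * r * q - k with hNdef
  have hN : N = k * m := by
    rw [hNdef, hmdef, Nat.mul_sub, mul_assoc, mul_one]
  have hk0 : 0 < k := by omega
  have hlt : ∀ v : Fin N, v.val / m < k := by
    intro v
    have hv : v.val < k * m := hN ▸ v.isLt
    exact Nat.div_lt_of_lt_mul (by rwa [mul_comm] at hv)
  -- fiber cardinality, computed once
  have hfib : ∀ i : Fin k,
      (Finset.univ.filter (fun v : Fin N => (⟨v.val / m, hlt v⟩ : Fin k) = i)).card = m := by
    intro i
    have hfeq : (Finset.univ.filter (fun v : Fin N => (⟨v.val / m, hlt v⟩ : Fin k) = i))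
        = (Finset.univ.filter (fun v : Fin N => v.val / m = i.val)) := by
      apply Finset.filter_congr; intro v _; simp [Fin.ext_iff]
    rw [hfeq]
    have : (Finset.univ.filter (fun v : Fin N => v.val / m = i.val)).card
        = (Finset.univ : Finset (Fin m)).card := by
      refine Finset.card_bij' (fun a _ => (⟨a.val % m, Nat.mod_lt _ hm0⟩ : Fin m))
        (fun b _ => (⟨i.val * m + b.val, by
          have hb := b.isLt
          have h1 : i.val * m + b.val < (i.val + 1) * m := by
            rw [add_mul, one_mul]; omega
          have h2 : (i.val + 1) * m ≤ k * m := Nat.mul_le_mul_right m i.isLt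
          omega⟩ : Fin N)) (fun a ha => mem_univ _) ?_ ?_ ?_
      · intro b hb
        simp only [mem_filter, mem_univ, true_and]
        rw [mul_comm, Nat.mul_add_div hm0, Nat.div_eq_of_lt b.isLt, add_zero]
      · intro a ha
        simp only [mem_filter, mem_univ, true_and] at ha
        apply Fin.ext
        simp only
        rw [← ha, Nat.div_add_mod']
      · intro b hb
        apply Fin.ext
        simp only
        rw [mul_comm, Nat.mul_add_mod, Nat.mod_eq_of_lt b.isLt]
    rw [this, Finset.card_fin]
  refine ⟨fun v => ⟨v.val / m, hlt v⟩, fun i => hfib i, ?_, ?_⟩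
  · rintro (⟨u₁, u₂, u₃, v₁, v₂, _, _, _, _, h5, _⟩ |
            ⟨u₁, u₂, u₃, v₁, v₂, _, _, _, _, _, _, _, h8, _⟩)
    · exact h5 rfl
    · exact h8 rfl
  · rintro ⟨i, f, hf, hedge⟩
    have hright : ∀ a b, (manyPaths r l).Adj a b → ∀ v, f a = Sum.inr v →
        (⟨v.val / m, hlt v⟩ : Fin k) = i := by
      intro a b hab v hav
      obtain ⟨u, w, hc, (⟨h1, h2⟩ | ⟨h1, h2⟩)⟩ := hedge a b hab
      · rw [hav] at h1; exact absurd h1 (by simp)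
      · rw [hav] at h1
        obtain rfl : v = w := Sum.inr.inj h1
        exact hc
    have halt : ∀ a b, (manyPaths r l).Adj a b → (f b).isRight = !(f a).isRight := by
      intro a b hab
      obtain ⟨u, w, hc, (⟨h1, h2⟩ | ⟨h1, h2⟩)⟩ := hedge a b hab
      · rw [h1, h2]; rfl
      · rw [h1, h2]; rfl
    have hadj : ∀ (j : Fin r) (t : ℕ) (ht : t + 1 < l),
        (manyPaths r l).Adj ⟨j, ⟨t, by omega⟩⟩ ⟨j, ⟨t + 1, ht⟩⟩ := by
      intro j t ht
      exact ⟨j, ⟨t, by omega⟩, ⟨t + 1, ht⟩, pathGraph_adj.mpr (Or.inl rfl), rfl, rfl⟩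
    have h0l : 0 < l := by omega
    have hnbr : ∀ (j : Fin r) (t : ℕ) (ht : t < l) (ht1 : 1 ≤ t ∨ t + 1 < l),
        ∃ b, (manyPaths r l).Adj ⟨j, ⟨t, ht⟩⟩ b := by
      intro j t ht ht1
      by_cases h : t + 1 < l
      · exact ⟨⟨j, ⟨t + 1, h⟩⟩, hadj j t h⟩
      · have h1t : 1 ≤ t := by omega
        refine ⟨⟨j, ⟨t - 1, by omega⟩⟩,
          ⟨j, ⟨t, ht⟩, ⟨t - 1, by omega⟩, pathGraph_adj.mpr (Or.inr ?_), rfl, rfl⟩⟩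
        show t - 1 + 1 = t
        omega
    have hpar : ∀ (j : Fin r) (t : ℕ) (ht : t < l),
        (f ⟨j, ⟨t, ht⟩⟩).isRight =
          (if t % 2 = 0 then (f ⟨j, ⟨0, h0l⟩⟩).isRight else !(f ⟨j, ⟨0, h0l⟩⟩).isRight) := by
      intro j t
      induction t with
      | zero => intro ht; rfl
      | succ s ih =>
        intro ht
        have hs : s < l := by omega
        rw [halt ⟨j, ⟨s, hs⟩⟩ ⟨j, ⟨s + 1, ht⟩⟩ (hadj j s ht), ih hs]
        rcases Nat.even_or_odd s with he | ho
        · have h1 : s % 2 = 0 := Nat.even_iff.mp he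
          have h2 : (s + 1) % 2 = 1 := by omega
          simp [h1, h2]
        · have h1 : s % 2 = 1 := Nat.odd_iff.mp ho
          have h2 : (s + 1) % 2 = 0 := by omega
          simp [h1, h2]
    have hpos : ∀ (j : Fin r) (s : Fin q),
        2 * s.val + (if (f ⟨j, ⟨0, h0l⟩⟩).isRight = true then 0 else 1) < l := by
      intro j s
      have := s.isLt
      split <;> omega
    have hisr : ∀ (j : Fin r) (s : Fin q),
        (f ⟨j, ⟨2 * s.val + (if (f ⟨j, ⟨0, h0l⟩⟩).isRight = true then 0 else 1),
          hpos j s⟩⟩).isRight = true := by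
      intro j s
      rw [hpar]
      rcases hb : (f ⟨j, ⟨0, h0l⟩⟩).isRight with _ | _
      · have h1 : (2 * s.val + 1) % 2 ≠ 0 := by omega
        simp [h1]
      · have h1 : (2 * s.val) % 2 = 0 := by omega
        have h2 : (2 * s.val + 0) % 2 = 0 := by omega
        simp [h1, h2]
    have hv : ∀ js : Fin r × Fin q, ∃ v : Fin N,
        f ⟨js.1, ⟨2 * js.2.val + (if (f ⟨js.1, ⟨0, h0l⟩⟩).isRight = true then 0 else 1),
          hpos js.1 js.2⟩⟩ = Sum.inr v ∧ (⟨v.val / m, hlt v⟩ : Fin k) = i := by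
      rintro ⟨j, s⟩
      have hr1 := hisr j s
      have htl := hpos j s
      obtain ⟨b, hb⟩ := hnbr j
        (2 * s.val + (if (f ⟨j, ⟨0, h0l⟩⟩).isRight = true then 0 else 1)) htl
        (by split <;> omega)
      rcases hfx : f (⟨j, ⟨2 * s.val + (if (f ⟨j, ⟨0, h0l⟩⟩).isRight = true then 0 else 1),
          hpos j s⟩⟩ : Σ _ : Fin r, Fin l) with u | v
      · rw [hfx] at hr1; simp at hr1
      · exact ⟨v, rfl, hright _ b hb v hfx⟩
    classical
    choose F hF1 hF2 using hv
    have hinj : Function.Injective F := by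
      rintro ⟨j, s⟩ ⟨j', s'⟩ hFe
      have e1 := hF1 (j, s)
      have e2 := hF1 (j', s')
      have h := hf (e1.trans ((congrArg Sum.inr hFe).trans e2.symm))
      have hj : j = j' := congrArg Sigma.fst h
      subst hj
      have h2 : (2 * s.val + (if (f ⟨j, ⟨0, h0l⟩⟩).isRight = true then 0 else 1))
          = 2 * s'.val + (if (f ⟨j, ⟨0, h0l⟩⟩).isRight = true then 0 else 1) :=
        congrArg (fun x => (x.2 : Fin l).val) h
      have hss : s = s' := Fin.ext (by omega)
      rw [hss]
    have hcardle : (Finset.univ : Finset (Fin r × Fin q)).card ≤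
        (Finset.univ.filter (fun v : Fin N => (⟨v.val / m, hlt v⟩ : Fin k) = i)).card := by
      apply Finset.card_le_card_of_injOn F
        (fun js _ => by simp only [mem_coe, mem_filter, mem_univ, true_and]; exact hF2 js)
      exact hinj.injOn
    rw [hfib i] at hcardle
    simp only [Finset.card_univ, Fintype.card_prod, Fintype.card_fin] at hcardle
    omega
end

section
/- For integers t ≥ 3 and k ≥ t + 2, bgr_k(P_5 : K_{t,t}) = kt − k + 1. -/
open Function Finset SimpleGraph

/-- `n` witnesses the bipartite Gallai–Ramsey property for a rainbow `P₅` versus a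
monochromatic `K_{t,t}` with `k` colors. -/
def bgrP5Ktt (k t n : ℕ) : Prop :=
  k ≤ n ^ 2 ∧ ∀ N : ℕ, n ≤ N → ∀ c : Fin N → Fin N → Fin k,
    (∀ i : Fin k, ∃ u v, c u v = i) →
    hasRainbowP5 c ∨ hasMonoKst c t t

namespace BGR

variable {γ : Type*} {N : ℕ}

/-- transpose -/
def tr {N : ℕ} {γ : Type*} (c : Fin N → Fin N → γ) : Fin N → Fin N → γ := fun v u => c u v

/-- "row pattern OK": no rainbow P5 using three rows and two columns. -/
def ROK (c : Fin N → Fin N → γ) : Prop :=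
  ∀ u₁ u₂ u₃ v₁ v₂ : Fin N, u₁ ≠ u₂ → u₁ ≠ u₃ → u₂ ≠ u₃ → v₁ ≠ v₂ →
    c u₁ v₁ ≠ c u₂ v₁ → c u₁ v₁ ≠ c u₂ v₂ → c u₁ v₁ ≠ c u₃ v₂ →
    c u₂ v₁ ≠ c u₂ v₂ → c u₂ v₁ ≠ c u₃ v₂ → c u₂ v₂ ≠ c u₃ v₂ → False

lemma rok_of_not {c : Fin N → Fin N → γ} (h : ¬ rbP5pat c) : ROK c := by
  intro u₁ u₂ u₃ v₁ v₂ h1 h2 h3 h4 e1 e2 e3 e4 e5 e6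
  exact h ⟨u₁, u₂, u₃, v₁, v₂, h1, h2, h3, h4, e1, e2, e3, e4, e5, e6⟩

/-- pair condition between two "rows" seen as functions on columns: the column-pattern
P5 with first row `g` (twice) and second row `h` (twice). -/
def PairOK (g h : Fin N → γ) : Prop :=
  ∀ w₁ w₂ w₃ : Fin N, w₁ ≠ w₂ → w₁ ≠ w₃ → w₂ ≠ w₃ →
    g w₁ ≠ g w₂ → g w₁ ≠ h w₂ → g w₁ ≠ h w₃ →
    g w₂ ≠ h w₂ → g w₂ ≠ h w₃ → h w₂ ≠ h w₃ → False

lemma pairOK_of_cok {c : Fin N → Fin N → γ} (hC : ROK (tr c)) {u u' : Fin N} (hne : u ≠ u') :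
    PairOK (c u) (c u') := by
  intro w₁ w₂ w₃ a1 a2 a3 e1 e2 e3 e4 e5 e6
  exact hC w₁ w₂ w₃ u u' a1 a2 a3 hne e1 e2 e3 e4 e5 e6

lemma exists_ne4 (hN : 5 ≤ N) (a b c d : Fin N) :
    ∃ w : Fin N, w ≠ a ∧ w ≠ b ∧ w ≠ c ∧ w ≠ d := by
  classical
  have hpos : 0 < (({a, b, c, d} : Finset (Fin N))ᶜ).card := by
    rw [Finset.card_compl]
    have h4 : ({a, b, c, d} : Finset (Fin N)).card ≤ 4 := by
      apply le_trans (Finset.card_insert_le _ _)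
      apply Nat.succ_le_succ
      apply le_trans (Finset.card_insert_le _ _)
      apply Nat.succ_le_succ
      apply le_trans (Finset.card_insert_le _ _)
      apply Nat.succ_le_succ
      simp
    have hc : Fintype.card (Fin N) = N := Fintype.card_fin N
    omega
  obtain ⟨w, hw⟩ := Finset.card_pos.mp hpos
  rw [Finset.mem_compl] at hw
  simp only [Finset.mem_insert, Finset.mem_singleton, not_or] at hw
  exact ⟨w, hw.1, hw.2.1, hw.2.2.1, hw.2.2.2⟩

lemma ex2 {α : Type*} {s : Finset α} (h : 2 ≤ s.card) : ∃ a ∈ s, ∃ b ∈ s, a ≠ b :=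
  Finset.one_lt_card.mp h

lemma ex3 {α : Type*} {s : Finset α} (h : 3 ≤ s.card) :
    ∃ a ∈ s, ∃ b ∈ s, ∃ c ∈ s, a ≠ b ∧ a ≠ c ∧ b ≠ c := by
  classical
  have h0 : 0 < s.card := by omega
  obtain ⟨a, ha⟩ := Finset.card_pos.mp h0
  have h2 : 2 ≤ (s.erase a).card := by
    rw [Finset.card_erase_of_mem ha]; omega
  obtain ⟨b, hb, c, hc, hbc⟩ := ex2 h2
  exact ⟨a, ha, b, Finset.mem_of_mem_erase hb, c, Finset.mem_of_mem_erase hc,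
    (Finset.ne_of_mem_erase hb).symm, (Finset.ne_of_mem_erase hc).symm, hbc⟩

lemma ex4 {α : Type*} {s : Finset α} (h : 4 ≤ s.card) :
    ∃ a ∈ s, ∃ b ∈ s, ∃ c ∈ s, ∃ d ∈ s,
      a ≠ b ∧ a ≠ c ∧ a ≠ d ∧ b ≠ c ∧ b ≠ d ∧ c ≠ d := by
  classical
  have h0 : 0 < s.card := by omega
  obtain ⟨a, ha⟩ := Finset.card_pos.mp h0
  have h3 : 3 ≤ (s.erase a).card := by
    rw [Finset.card_erase_of_mem ha]; omega
  obtain ⟨b, hb, c, hc, d, hd, hbc, hbd, hcd⟩ := ex3 h3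
  exact ⟨a, ha, b, Finset.mem_of_mem_erase hb, c, Finset.mem_of_mem_erase hc,
    d, Finset.mem_of_mem_erase hd,
    (Finset.ne_of_mem_erase hb).symm, (Finset.ne_of_mem_erase hc).symm,
    (Finset.ne_of_mem_erase hd).symm, hbc, hbd, hcd⟩


section PairLemma

variable {g h : Fin N → γ}

lemma keyK (P1 : PairOK g h) {D : Fin N} (hD : g D ≠ h D) :
    ∀ w1 w3, w1 ≠ D → w3 ≠ D → w1 ≠ w3 →
      g w1 ≠ g D → g w1 ≠ h D → h w3 ≠ g D → h w3 ≠ h D → h w3 = g w1 := by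
  intro w1 w3 h1 h3 h13 a1 a2 b1 b2
  by_contra hne
  exact P1 w1 D w3 h1 h13 (Ne.symm h3) a1 a2 (fun e => hne e.symm) hD
    (fun e => b1 e.symm) (fun e => b2 e.symm)

lemma caseA2_main (hN : 5 ≤ N)
    (P1 : PairOK g h) (P2 : PairOK h g) {D ws Y : Fin N}
    (hD : g D ≠ h D)
    (hwsD : ws ≠ D) (hYD : Y ≠ D) (hwsY : ws ≠ Y)
    (hgws1 : g ws ≠ g D) (hgws2 : g ws ≠ h D)
    (hgY1 : g Y ≠ g D) (hgY2 : g Y ≠ h D)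
    (hgne : g ws ≠ g Y)
    (hhws1 : h ws ≠ g D) (hhws2 : h ws ≠ h D) : False := by
  have hK1 := keyK P1 hD
  have hK2 := keyK P2 hD.symm
  -- g Y = h ws  (the value ρ)
  have hgYρ : g Y = h ws := hK2 ws Y hwsD hYD hwsY hhws2 hhws1 hgY2 hgY1
  have hξρ : g ws ≠ h ws := fun e => hgne (e.trans hgYρ.symm)
  by_cases hbb : ∃ w3, w3 ≠ D ∧ w3 ≠ ws ∧ h w3 = h D
  · obtain ⟨w3, h3D, h3ws, h3b⟩ := hbb
    exact P1 D ws w3 (Ne.symm hwsD) (Ne.symm h3D) (Ne.symm h3ws)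
      (Ne.symm hgws1) (Ne.symm hhws1) (by rw [h3b]; exact hD)
      hξρ (by rw [h3b]; exact hgws2) (by rw [h3b]; exact hhws2)
  · push_neg at hbb
    have hAoff : ∀ w3, w3 ≠ D → w3 ≠ ws → w3 ≠ Y → h w3 = g D := by
      intro w3 h3D h3ws h3Y
      by_cases hin1 : h w3 = g D
      · exact hin1
      · exfalso
        have e1 : h w3 = g ws :=
          hK1 ws w3 hwsD h3D (Ne.symm h3ws) hgws1 hgws2 hin1 (hbb w3 h3D h3ws)
        have e2 : h w3 = g Y :=
          hK1 Y w3 hYD h3D (Ne.symm h3Y) hgY1 hgY2 hin1 (hbb w3 h3D h3ws)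
        exact hgne (e1.symm.trans e2)
    have hYb : h Y ≠ h D := hbb Y hYD (Ne.symm hwsY)
    have hY2 : h Y = g D ∨ h Y = g ws := by
      by_cases hin : h Y = g D
      · exact Or.inl hin
      · exact Or.inr (hK1 ws Y hwsD hYD hwsY hgws1 hgws2 hin hYb)
    rcases hY2 with hYa | hYξ
    · -- a2B : h Y = g D ; pattern P2 (D, Y, ws) : (b, a, ρ, ξ)
      exact P2 D Y ws (Ne.symm hYD) (Ne.symm hwsD) (Ne.symm hwsY)
        (by rw [hYa]; exact fun e => hD e.symm)
        (by rw [hgYρ]; exact Ne.symm hhws2)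
        (Ne.symm hgws2)
        (by rw [hYa, hgYρ]; exact Ne.symm hhws1)
        (by rw [hYa]; exact Ne.symm hgws1)
        (by rw [hgYρ]; exact fun e => hξρ e.symm)
    · -- a2A : h Y = g ws
      obtain ⟨W, hWD, hWws, hWY, -⟩ := exists_ne4 hN D ws Y Y
      have hhW : h W = g D := hAoff W hWD hWws hWY
      by_cases hgWa : g W = g D
      · -- P2 (D, Y, W) : (b, ξ, ρ, a)
        exact P2 D Y W (Ne.symm hYD) (Ne.symm hWD) (fun e => hWY e.symm)
          (by rw [hYξ]; exact Ne.symm hgws2)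
          (by rw [hgYρ]; exact Ne.symm hhws2)
          (by rw [hgWa]; exact hD.symm)
          (by rw [hYξ, hgYρ]; exact hξρ)
          (by rw [hYξ, hgWa]; exact hgws1)
          (by rw [hgYρ, hgWa]; exact hhws1)
      · by_cases hgWb : g W = h D
        · -- P1 (W, Y, W') : (b, ρ, ξ, a)
          obtain ⟨W', hW'D, hW'ws, hW'Y, hW'W⟩ := exists_ne4 hN D ws Y W
          have hhW' : h W' = g D := hAoff W' hW'D hW'ws hW'Y
          exact P1 W Y W' (fun e => hWY e) (fun e => hW'W e.symm) (fun e => hW'Y e.symm)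
            (by rw [hgWb, hgYρ]; exact Ne.symm hhws2)
            (by rw [hgWb, hYξ]; exact Ne.symm hgws2)
            (by rw [hgWb, hhW']; exact hD.symm)
            (by rw [hgYρ, hYξ]; exact fun e => hξρ e.symm)
            (by rw [hgYρ, hhW']; exact hhws1)
            (by rw [hYξ, hhW']; exact hgws1)
        · -- g W = ρ by K2 ; P1 (ws, W, D) : (ξ, ρ, a, b)
          have hgWρ : g W = h ws :=
            hK2 ws W hwsD hWD (fun e => hWws e.symm) hhws2 hhws1 hgWb hgWa
          exact P1 ws W D (fun e => hWws e.symm) hwsD hWD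
            (by rw [hgWρ]; exact hξρ)
            (by rw [hhW]; exact hgws1)
            hgws2
            (by rw [hgWρ, hhW]; exact hhws1)
            (by rw [hgWρ]; exact hhws2)
            (by rw [hhW]; exact hD)

lemma pick_avoid3 {c1 c2 c3 c4 x y z : γ}
    (h12 : c1 ≠ c2) (h13 : c1 ≠ c3) (h14 : c1 ≠ c4)
    (h23 : c2 ≠ c3) (h24 : c2 ≠ c4) (h34 : c3 ≠ c4) :
    (c1 ≠ x ∧ c1 ≠ y ∧ c1 ≠ z) ∨ (c2 ≠ x ∧ c2 ≠ y ∧ c2 ≠ z) ∨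
    (c3 ≠ x ∧ c3 ≠ y ∧ c3 ≠ z) ∨ (c4 ≠ x ∧ c4 ≠ y ∧ c4 ≠ z) := by
  by_contra hcon
  push_neg at hcon
  have e1 : c1 = x ∨ c1 = y ∨ c1 = z := by
    by_cases a : c1 = x
    · exact Or.inl a
    · by_cases b : c1 = y
      · exact Or.inr (Or.inl b)
      · exact Or.inr (Or.inr (hcon.1 a b))
  have e2 : c2 = x ∨ c2 = y ∨ c2 = z := by
    by_cases a : c2 = x
    · exact Or.inl a
    · by_cases b : c2 = y
      · exact Or.inr (Or.inl b)
      · exact Or.inr (Or.inr (hcon.2.1 a b))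
  have e3 : c3 = x ∨ c3 = y ∨ c3 = z := by
    by_cases a : c3 = x
    · exact Or.inl a
    · by_cases b : c3 = y
      · exact Or.inr (Or.inl b)
      · exact Or.inr (Or.inr (hcon.2.2.1 a b))
  have e4 : c4 = x ∨ c4 = y ∨ c4 = z := by
    by_cases a : c4 = x
    · exact Or.inl a
    · by_cases b : c4 = y
      · exact Or.inr (Or.inl b)
      · exact Or.inr (Or.inr (hcon.2.2.2 a b))
  rcases e1 with rfl | rfl | rfl <;> rcases e2 with rfl | rfl | rfl <;>
    rcases e3 with rfl | rfl | rfl <;> rcases e4 with rfl | rfl | rfl <;> simp_all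

lemma caseB_core (hN : 5 ≤ N)
    (P1 : PairOK g h) (P2 : PairOK h g) {D Pρ Pb : Fin N}
    (hD : g D ≠ h D)
    (hρ1 : g Pρ ≠ g D) (hρ2 : g Pρ ≠ h D)
    (hPb : g Pb = h D)
    (HB : ∀ w w', g w ≠ g D → g w ≠ h D → g w' ≠ g D → g w' ≠ h D → g w = g w')
    {τ : γ} (hτ1 : τ ≠ g D) (hτ2 : τ ≠ h D) (hτ3 : τ ≠ g Pρ)
    (mτ : (∃ w, g w = τ) ∨ (∃ w, h w = τ)) : False := by
  have hK1 := keyK P1 hD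
  have hK2 := keyK P2 hD.symm
  have rangeg : ∀ w, g w = g D ∨ g w = h D ∨ g w = g Pρ := by
    intro w
    by_cases e1 : g w = g D
    · exact Or.inl e1
    · by_cases e2 : g w = h D
      · exact Or.inr (Or.inl e2)
      · exact Or.inr (Or.inr (HB w Pρ e1 e2 hρ1 hρ2))
  have hτg : ∀ w, g w ≠ τ := by
    intro w
    rcases rangeg w with e | e | e <;> rw [e]
    · exact fun ee => hτ1 ee.symm
    · exact fun ee => hτ2 ee.symm
    · exact fun ee => hτ3 ee.symm
  obtain ⟨Wτ, hWτ⟩ : ∃ w, h w = τ := by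
    rcases mτ with ⟨w, hw⟩ | hh
    · exact absurd hw (hτg w)
    · exact hh
  have hWτD : Wτ ≠ D := by
    intro e; rw [e] at hWτ; exact hτ2 hWτ.symm
  have claim1 : ∀ w, w ≠ Wτ → w ≠ D → (g w = g D ∨ g w = h D) := by
    intro w hw hd
    by_contra hcon
    push_neg at hcon
    have := hK2 Wτ w hWτD hd (fun e => hw e.symm)
      (by rw [hWτ]; exact hτ2) (by rw [hWτ]; exact hτ1) hcon.2 hcon.1
    rw [hWτ] at this
    exact hτg w this
  have hPρD : Pρ ≠ D := fun e => hρ1 (by rw [e])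
  have hPρWτ : Pρ = Wτ := by
    by_contra hc
    rcases claim1 Pρ hc hPρD with e | e
    · exact hρ1 e
    · exact hρ2 e
  have hgWτ : g Wτ = g Pρ := by rw [← hPρWτ]
  have hPbD : Pb ≠ D := by
    intro e; rw [e] at hPb; exact hD hPb
  have hPbWτ : Pb ≠ Wτ := by
    intro e; rw [e, hgWτ] at hPb; exact hρ2 hPb
  have B2 : ∀ w3, w3 ≠ Wτ → w3 ≠ D → w3 ≠ Pb → h w3 = g Pρ := by
    intro w3 h1 h2 h3
    have d1 : h w3 = g D ∨ h w3 = g Pρ ∨ h w3 = τ := by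
      by_contra hc; push_neg at hc
      exact P1 D Wτ w3 (Ne.symm hWτD) (Ne.symm h2) (Ne.symm h1)
        (by rw [hgWτ]; exact Ne.symm hρ1)
        (by rw [hWτ]; exact Ne.symm hτ1)
        (Ne.symm hc.1)
        (by rw [hgWτ, hWτ]; exact fun e => hτ3 e.symm)
        (by rw [hgWτ]; exact Ne.symm hc.2.1)
        (by rw [hWτ]; exact Ne.symm hc.2.2)
    have d2 : h w3 = h D ∨ h w3 = g Pρ ∨ h w3 = τ := by
      by_contra hc; push_neg at hc
      exact P1 Pb Wτ w3 hPbWτ (fun e => h3 e.symm) (Ne.symm h1)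
        (by rw [hPb, hgWτ]; exact Ne.symm hρ2)
        (by rw [hPb, hWτ]; exact Ne.symm hτ2)
        (by rw [hPb]; exact Ne.symm hc.1)
        (by rw [hgWτ, hWτ]; exact fun e => hτ3 e.symm)
        (by rw [hgWτ]; exact Ne.symm hc.2.1)
        (by rw [hWτ]; exact Ne.symm hc.2.2)
    have d3 : h w3 = g D ∨ h w3 = h D ∨ h w3 = g Pρ := by
      by_contra hc; push_neg at hc
      have := hK1 Wτ w3 hWτD h2 (Ne.symm h1)
        (by rw [hgWτ]; exact hρ1) (by rw [hgWτ]; exact hρ2) hc.1 hc.2.1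
      rw [hgWτ] at this
      exact hc.2.2 this
    rcases d1 with e1 | e1 | e1
    · rcases d2 with e2 | e2 | e2
      · exact absurd (e1.symm.trans e2) hD
      · exact e2
      · exact absurd (e1.symm.trans e2).symm hτ1
    · exact e1
    · rcases d3 with e3 | e3 | e3
      · exact absurd (e1.symm.trans e3).symm (fun e => hτ1 e.symm)
      · exact absurd (e1.symm.trans e3).symm (fun e => hτ2 e.symm)
      · exact absurd (e1.symm.trans e3).symm (fun e => hτ3 e.symm)
  obtain ⟨Z, hZWτ, hZD, hZPb, -⟩ := exists_ne4 hN Wτ D Pb Pb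
  have hhZ : h Z = g Pρ := B2 Z hZWτ hZD hZPb
  rcases claim1 Z hZWτ hZD with e | e
  · -- P2 (Wτ, Z, Pb) : (τ, ρ, a, b)
    exact P2 Wτ Z Pb (Ne.symm hZWτ) (Ne.symm hPbWτ) hZPb
      (by rw [hWτ, hhZ]; exact hτ3)
      (by rw [hWτ, e]; exact hτ1)
      (by rw [hWτ, hPb]; exact hτ2)
      (by rw [hhZ, e]; exact hρ1)
      (by rw [hhZ, hPb]; exact hρ2)
      (by rw [e, hPb]; exact hD)
  · -- P2 (Wτ, Z, D) : (τ, ρ, b, a)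
    exact P2 Wτ Z D (Ne.symm hZWτ) hWτD hZD
      (by rw [hWτ, hhZ]; exact hτ3)
      (by rw [hWτ, e]; exact hτ2)
      (by rw [hWτ]; exact hτ1)
      (by rw [hhZ, e]; exact hρ2)
      (by rw [hhZ]; exact hρ1)
      (by rw [e]; exact Ne.symm hD)

end PairLemma


section PairMain

variable {g h : Fin N → γ}

theorem pair_lemma (hN : 5 ≤ N)
    (P1 : PairOK g h) (P2 : PairOK h g)
    {p q r : Fin N} (hpq : g p ≠ g q) (hpr : g p ≠ g r) (hqr : g q ≠ g r)
    {D : Fin N} (hD : g D ≠ h D)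
    {A B : Fin N} (hAB : h A ≠ h B)
    {c1 c2 c3 c4 : γ}
    (h12 : c1 ≠ c2) (h13 : c1 ≠ c3) (h14 : c1 ≠ c4)
    (h23 : c2 ≠ c3) (h24 : c2 ≠ c4) (h34 : c3 ≠ c4)
    (m1 : (∃ w, g w = c1) ∨ (∃ w, h w = c1))
    (m2 : (∃ w, g w = c2) ∨ (∃ w, h w = c2))
    (m3 : (∃ w, g w = c3) ∨ (∃ w, h w = c3))
    (m4 : (∃ w, g w = c4) ∨ (∃ w, h w = c4)) : False := by
  classical
  have hK1 := keyK P1 hD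
  have hK2 := keyK P2 hD.symm
  by_cases hA : ∃ w1 w1', w1 ≠ w1' ∧ (g w1 ≠ g D ∧ g w1 ≠ h D) ∧
      (g w1' ≠ g D ∧ g w1' ≠ h D) ∧ g w1 ≠ g w1'
  · obtain ⟨w1, w1', hww, ⟨hg11, hg12⟩, ⟨hg11', hg12'⟩, hgne⟩ := hA
    have hw1D : w1 ≠ D := fun e => hg11 (by rw [e])
    have hw1'D : w1' ≠ D := fun e => hg11' (by rw [e])
    by_cases hstar : ∃ w, h w ≠ g D ∧ h w ≠ h D
    · -- case A2
      obtain ⟨ws, hs1, hs2⟩ := hstar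
      have hwsD : ws ≠ D := fun e => hs2 (by rw [e])
      have hin : ws = w1 ∨ ws = w1' := by
        by_contra hc
        push_neg at hc
        have e1 : g w1 = h ws :=
          hK2 ws w1 hwsD hw1D hc.1 hs2 hs1 hg12 hg11
        have e2 : g w1' = h ws :=
          hK2 ws w1' hwsD hw1'D hc.2 hs2 hs1 hg12' hg11'
        exact hgne (e1.trans e2.symm)
      rcases hin with rfl | rfl
      · exact caseA2_main hN P1 P2 hD hw1D hw1'D hww hg11 hg12 hg11' hg12' hgne hs1 hs2
      · exact caseA2_main hN P1 P2 hD hw1'D hw1D (Ne.symm hww) hg11' hg12' hg11 hg12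
          (Ne.symm hgne) hs1 hs2
    · -- case A1 : every h-value is in {g D, h D}
      push_neg at hstar
      have hSS : ∀ w, h w = g D ∨ h w = h D := by
        intro w
        by_cases e : h w = g D
        · exact Or.inl e
        · exact Or.inr (hstar w e)
      have hne_g1 : ∀ w, h w ≠ g w1 := by
        intro w
        rcases hSS w with e | e <;> rw [e]
        · exact Ne.symm hg11
        · exact Ne.symm hg12
      have hne_g1' : ∀ w, h w ≠ g w1' := by
        intro w
        rcases hSS w with e | e <;> rw [e]
        · exact Ne.symm hg11'
        · exact Ne.symm hg12'
      by_cases hee : h w1 = h w1'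
      · have hZex : h A ≠ h w1 ∨ h B ≠ h w1 := by
          by_contra hc
          push_neg at hc
          exact hAB (hc.1.trans hc.2.symm)
        obtain ⟨Z, hZ⟩ : ∃ Z, h Z ≠ h w1 := by
          rcases hZex with e | e
          · exact ⟨A, e⟩
          · exact ⟨B, e⟩
        have hZw1 : Z ≠ w1 := fun e => hZ (by rw [e])
        have hZw1' : Z ≠ w1' := fun e => hZ (by rw [e, ← hee])
        exact P2 Z w1 w1' hZw1 hZw1' hww
          hZ (hne_g1 Z) (hne_g1' Z) (hne_g1 w1) (hne_g1' w1) hgne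
      · obtain ⟨X, hX1, hX2, -, -⟩ := exists_ne4 hN w1 w1' w1 w1'
        by_cases hXe : h X = h w1
        · exact P2 X w1' w1 hX2 hX1 (Ne.symm hww)
            (by rw [hXe]; exact hee) (hne_g1' X) (hne_g1 X)
            (hne_g1' w1') (hne_g1 w1') (Ne.symm hgne)
        · exact P2 X w1 w1' hX1 hX2 hww
            hXe (hne_g1 X) (hne_g1' X) (hne_g1 w1) (hne_g1' w1) hgne
  · -- case B
    push_neg at hA
    have HB : ∀ w w', g w ≠ g D → g w ≠ h D → g w' ≠ g D → g w' ≠ h D → g w = g w' := by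
      intro w w' a1 a2 b1 b2
      by_cases he : w = w'
      · rw [he]
      · exact hA w w' he ⟨a1, a2⟩ ⟨b1, b2⟩
    -- find Pρ (g-value outside {g D, h D}) and Pb (g-value = h D) among p,q,r
    have hcore : ∃ Pρ Pb : Fin N, (g Pρ ≠ g D ∧ g Pρ ≠ h D) ∧ g Pb = h D := by
      by_cases h1 : g p = g D ∨ g p = h D
      · by_cases h2 : g q = g D ∨ g q = h D
        · by_cases h3 : g r = g D ∨ g r = h D
          · exfalso
            rcases h1 with e1 | e1 <;> rcases h2 with e2 | e2 <;>
              rcases h3 with e3 | e3 <;> simp_all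
          · push_neg at h3
            rcases h1 with e1 | e1
            · rcases h2 with e2 | e2
              · exact absurd (e1.trans e2.symm) hpq
              · exact ⟨r, q, h3, e2⟩
            · exact ⟨r, p, h3, e1⟩
        · push_neg at h2
          by_cases h3 : g r = g D ∨ g r = h D
          · rcases h1 with e1 | e1
            · rcases h3 with e3 | e3
              · exact absurd (e1.trans e3.symm) hpr
              · exact ⟨q, r, h2, e3⟩
            · exact ⟨q, p, h2, e1⟩
          · push_neg at h3
            exact absurd (HB q r h2.1 h2.2 h3.1 h3.2) hqr
      · push_neg at h1
        by_cases h2 : g q = g D ∨ g q = h D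
        · by_cases h3 : g r = g D ∨ g r = h D
          · rcases h2 with e2 | e2
            · rcases h3 with e3 | e3
              · exact absurd (e2.trans e3.symm) hqr
              · exact ⟨p, r, h1, e3⟩
            · exact ⟨p, q, h1, e2⟩
          · push_neg at h3
            exact absurd (HB p r h1.1 h1.2 h3.1 h3.2) hpr
        · push_neg at h2
          exact absurd (HB p q h1.1 h1.2 h2.1 h2.2) hpq
    obtain ⟨Pρ, Pb, ⟨hρ1, hρ2⟩, hPb⟩ := hcore
    rcases pick_avoid3 (x := g D) (y := h D) (z := g Pρ) h12 h13 h14 h23 h24 h34 with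
      ⟨t1, t2, t3⟩ | ⟨t1, t2, t3⟩ | ⟨t1, t2, t3⟩ | ⟨t1, t2, t3⟩
    · exact caseB_core hN P1 P2 hD hρ1 hρ2 hPb HB t1 t2 t3 m1
    · exact caseB_core hN P1 P2 hD hρ1 hρ2 hPb HB t1 t2 t3 m2
    · exact caseB_core hN P1 P2 hD hρ1 hρ2 hPb HB t1 t2 t3 m3
    · exact caseB_core hN P1 P2 hD hρ1 hρ2 hPb HB t1 t2 t3 m4

end PairMain


section FiveSection

/-- Five distinct colors all appearing in the coloring. -/
def Five (c : Fin N → Fin N → γ) : Prop :=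
  ∃ i : Fin 5 → γ, Function.Injective i ∧ ∀ j, ∃ u v, c u v = i j

lemma five_tr {c : Fin N → Fin N → γ} (F : Five c) : Five (tr c) := by
  obtain ⟨i, inj, app⟩ := F
  refine ⟨i, inj, fun j => ?_⟩
  obtain ⟨u, v, huv⟩ := app j
  exact ⟨v, u, huv⟩

/-- From five distinct appearing colors, find two distinct colors avoiding a "bad"
predicate, provided no четыре distinct colors can all be bad. -/
lemma five_avoidP_two {c : Fin N → Fin N → γ} (F : Five c) (P : γ → Prop)
    (hP : ∀ a b c' d : γ, a ≠ b → a ≠ c' → a ≠ d → b ≠ c' → b ≠ d → c' ≠ d →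
      P a → P b → P c' → P d → False) :
    ∃ τ1 τ2 : γ, τ1 ≠ τ2 ∧ ¬P τ1 ∧ ¬P τ2 ∧
      (∃ u v, c u v = τ1) ∧ (∃ u v, c u v = τ2) := by
  classical
  obtain ⟨i, inj, app⟩ := F
  set S : Finset (Fin 5) := Finset.univ.filter (fun j => P (i j)) with hS
  by_cases hcard : 4 ≤ S.card
  · exfalso
    obtain ⟨a, ha, b, hb, c', hc', d, hd, hab, hac, had, hbc, hbd, hcd⟩ := ex4 hcard
    simp only [hS, Finset.mem_filter] at ha hb hc' hd
    exact hP (i a) (i b) (i c') (i d) (inj.ne hab) (inj.ne hac) (inj.ne had)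
      (inj.ne hbc) (inj.ne hbd) (inj.ne hcd) ha.2 hb.2 hc'.2 hd.2
  · have hc2 : 2 ≤ (Finset.univ.filter (fun j => ¬ P (i j))).card := by
      have := Finset.card_filter_add_card_filter_not
        (s := (Finset.univ : Finset (Fin 5))) (p := fun j => P (i j))
      rw [← hS] at this
      simp only [Finset.card_univ, Fintype.card_fin] at this
      omega
    obtain ⟨a, ha, b, hb, hab⟩ := ex2 hc2
    simp only [Finset.mem_filter] at ha hb
    exact ⟨i a, i b, inj.ne hab, ha.2, hb.2, app a, app b⟩

/-- From five distinct appearing colors, find three distinct ones avoiding two values. -/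
lemma five_avoid2_three {c : Fin N → Fin N → γ} (F : Five c) (x y : γ) :
    ∃ j1 j2 j3 : γ, j1 ≠ j2 ∧ j1 ≠ j3 ∧ j2 ≠ j3 ∧
      (j1 ≠ x ∧ j1 ≠ y) ∧ (j2 ≠ x ∧ j2 ≠ y) ∧ (j3 ≠ x ∧ j3 ≠ y) ∧
      (∃ u v, c u v = j1) ∧ (∃ u v, c u v = j2) ∧ (∃ u v, c u v = j3) := by
  classical
  obtain ⟨i, inj, app⟩ := F
  set S : Finset (Fin 5) := Finset.univ.filter (fun j => i j = x ∨ i j = y) with hS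
  have hcard : S.card ≤ 2 := by
    by_contra hc
    push_neg at hc
    obtain ⟨a, ha, b, hb, c', hc', hab, hac, hbc⟩ := ex3 hc
    simp only [hS, Finset.mem_filter] at ha hb hc'
    have nab := inj.ne hab
    have nac := inj.ne hac
    have nbc := inj.ne hbc
    rcases ha.2 with e1 | e1 <;> rcases hb.2 with e2 | e2 <;> rcases hc'.2 with e3 | e3 <;>
      simp_all
  have hc3 : 3 ≤ (Finset.univ.filter (fun j => ¬ (i j = x ∨ i j = y))).card := by
    have := Finset.card_filter_add_card_filter_not
      (s := (Finset.univ : Finset (Fin 5))) (p := fun j => i j = x ∨ i j = y)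
    rw [← hS] at this
    simp only [Finset.card_univ, Fintype.card_fin] at this
    omega
  obtain ⟨a, ha, b, hb, c', hc', hab, hac, hbc⟩ := ex3 hc3
  simp only [Finset.mem_filter, not_or] at ha hb hc'
  exact ⟨i a, i b, i c', inj.ne hab, inj.ne hac, inj.ne hbc,
    ha.2, hb.2, hc'.2, app a, app b, app c'⟩

/-- From five distinct appearing colors, one avoiding three values. -/
lemma five_avoid3_one {c : Fin N → Fin N → γ} (F : Five c) (x y z : γ) :
    ∃ τ : γ, τ ≠ x ∧ τ ≠ y ∧ τ ≠ z ∧ ∃ u v, c u v = τ := by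
  obtain ⟨i, inj, app⟩ := F
  have h01 : i 0 ≠ i 1 := inj.ne (by decide)
  have h02 : i 0 ≠ i 2 := inj.ne (by decide)
  have h03 : i 0 ≠ i 3 := inj.ne (by decide)
  have h12 : i 1 ≠ i 2 := inj.ne (by decide)
  have h13 : i 1 ≠ i 3 := inj.ne (by decide)
  have h23 : i 2 ≠ i 3 := inj.ne (by decide)
  rcases pick_avoid3 (x := x) (y := y) (z := z) h01 h02 h03 h12 h13 h23 with
    ⟨t1, t2, t3⟩ | ⟨t1, t2, t3⟩ | ⟨t1, t2, t3⟩ | ⟨t1, t2, t3⟩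
  · exact ⟨i 0, t1, t2, t3, app 0⟩
  · exact ⟨i 1, t1, t2, t3, app 1⟩
  · exact ⟨i 2, t1, t2, t3, app 2⟩
  · exact ⟨i 3, t1, t2, t3, app 3⟩

end FiveSection

/-- The structure conclusion: a dominant color `m` such that in every column all
non-`m` entries agree, and all rows having two distinct non-`m` entries are identical. -/
def Wstruct (c : Fin N → Fin N → γ) : Prop :=
  ∃ m : γ, (∀ w u u', c u w ≠ m → c u' w ≠ m → c u w = c u' w) ∧
    (∀ u u', (∃ w w', c u w ≠ m ∧ c u w' ≠ m ∧ c u w ≠ c u w') →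
      (∃ w w', c u' w ≠ m ∧ c u' w' ≠ m ∧ c u' w ≠ c u' w') → ∀ w, c u w = c u' w)

section CaseX

variable {c : Fin N → Fin N → γ}

/-- X1 : if some row is 3-valued, every row is constant or a copy of it. -/
lemma rows_const_or_g (hR : ROK c) (hC : ROK (tr c)) (hN : 5 ≤ N) (F : Five c)
    {u₀ p q r : Fin N} (hpq : c u₀ p ≠ c u₀ q) (hpr : c u₀ p ≠ c u₀ r)
    (hqr : c u₀ q ≠ c u₀ r) (u : Fin N) :
    (∀ w w', c u w = c u w') ∨ (∀ w, c u w = c u₀ w) := by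
  classical
  by_contra hcon
  push_neg at hcon
  obtain ⟨⟨A, B, hAB⟩, D, hD⟩ := hcon
  have hu : u₀ ≠ u := fun e => hD (by rw [← e])
  have P1 := pairOK_of_cok hC hu
  have P2 := pairOK_of_cok hC hu.symm
  have hP : ∀ a b c' d : γ, a ≠ b → a ≠ c' → a ≠ d → b ≠ c' → b ≠ d → c' ≠ d →
      ((∃ w, c u₀ w = a) ∨ (∃ w, c u w = a)) →
      ((∃ w, c u₀ w = b) ∨ (∃ w, c u w = b)) →
      ((∃ w, c u₀ w = c') ∨ (∃ w, c u w = c')) →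
      ((∃ w, c u₀ w = d) ∨ (∃ w, c u w = d)) → False := by
    intro a b c' d n1 n2 n3 n4 n5 n6 m1 m2 m3 m4
    exact pair_lemma hN P1 P2 hpq hpr hqr (Ne.symm hD) hAB n1 n2 n3 n4 n5 n6 m1 m2 m3 m4
  obtain ⟨τ1, τ2, hτ12, hnP1, hnP2, ⟨x1, y1, hxy1⟩, ⟨x2, y2, hxy2⟩⟩ :=
    five_avoidP_two F (fun x => (∃ w, c u₀ w = x) ∨ (∃ w, c u w = x)) hP
  have hτ1g : ∀ w, c u₀ w ≠ τ1 := fun w e => hnP1 (Or.inl ⟨w, e⟩)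
  have hτ2g : ∀ w, c u₀ w ≠ τ2 := fun w e => hnP2 (Or.inl ⟨w, e⟩)
  -- the witness rows are constant
  have hconst : ∀ (x y : Fin N) (τ : γ), c x y = τ → (∀ w, c u₀ w ≠ τ) →
      ∀ w w', c x w = c x w' := by
    intro x y τ hxy hτg
    by_contra hc
    push_neg at hc
    obtain ⟨A', B', hA'B'⟩ := hc
    have hxu₀ : u₀ ≠ x := fun e => hτg y (by rw [e]; exact hxy)
    exact pair_lemma hN (pairOK_of_cok hC hxu₀) (pairOK_of_cok hC hxu₀.symm)
      hpq hpr hqr (D := y) (by rw [hxy]; exact hτg y) hA'B'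
      hpq hpr (hτg p) hqr (hτg q) (hτg r)
      (Or.inl ⟨p, rfl⟩) (Or.inl ⟨q, rfl⟩) (Or.inl ⟨r, rfl⟩) (Or.inr ⟨y, hxy⟩)
  have hx1const := hconst x1 y1 τ1 hxy1 hτ1g
  have hx2const := hconst x2 y2 τ2 hxy2 hτ2g
  have ex1 : c x1 p = τ1 := (hx1const p y1).trans hxy1
  have ex2 : c x2 q = τ2 := (hx2const q y2).trans hxy2
  have hx1x2 : x1 ≠ x2 := by
    intro e
    apply hτ12
    rw [← ex1, ← ex2, e]
    exact hx2const p q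
  have hx1u₀ : x1 ≠ u₀ := fun e => hτ1g p (by rw [← e]; exact ex1)
  have hx2u₀ : x2 ≠ u₀ := fun e => hτ2g q (by rw [← e]; exact ex2)
  exact hR x1 u₀ x2 p q hx1u₀ hx1x2 (Ne.symm hx2u₀) (fun e => hpq (by rw [e]))
    (by rw [ex1]; exact Ne.symm (hτ1g p))
    (by rw [ex1]; exact Ne.symm (hτ1g q))
    (by rw [ex1, ex2]; exact hτ12)
    hpq
    (by rw [ex2]; exact hτ2g p)
    (by rw [ex2]; exact hτ2g q)

/-- rainbow from two constant rows with distinct values and two suitable columns. -/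
lemma RB3 (hR : ROK c) {u₀ ea eb x y pp : Fin N}
    (ca : ∀ w w', c ea w = c ea w') (cb : ∀ w w', c eb w = c eb w')
    (vne : c ea pp ≠ c eb pp)
    (gxy : c u₀ x ≠ c u₀ y) (gx1 : c u₀ x ≠ c ea pp) (gx2 : c u₀ x ≠ c eb pp)
    (gy1 : c u₀ y ≠ c ea pp) (gy2 : c u₀ y ≠ c eb pp) : False := by
  have hea : ea ≠ u₀ := fun e => gxy (by rw [← e]; exact ca x y)
  have heb : eb ≠ u₀ := fun e => gxy (by rw [← e]; exact cb x y)
  have heab : ea ≠ eb := fun e => vne (by rw [e])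
  have hxy : x ≠ y := fun e => gxy (by rw [e])
  exact hR ea u₀ eb x y hea heab (Ne.symm heb) hxy
    (by rw [ca x pp]; exact Ne.symm gx1)
    (by rw [ca x pp]; exact Ne.symm gy1)
    (by rw [ca x pp, cb y pp]; exact vne)
    gxy
    (by rw [cb y pp]; exact gx2)
    (by rw [cb y pp]; exact gy2)

end CaseX


section CaseXMain

variable {c : Fin N → Fin N → γ}

lemma caseX (hR : ROK c) (hC : ROK (tr c)) (hN : 5 ≤ N) (F : Five c)
    {u₀ p q r : Fin N} (hpq : c u₀ p ≠ c u₀ q) (hpr : c u₀ p ≠ c u₀ r)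
    (hqr : c u₀ q ≠ c u₀ r) : Wstruct c := by
  classical
  have rowsplit := fun u => rows_const_or_g hR hC hN F hpq hpr hqr u
  have consts_eq : ∀ e1 e2 : Fin N, (∀ w w', c e1 w = c e1 w') →
      (∀ w w', c e2 w = c e2 w') → c e1 p = c e2 p := by
    intro e1 e2 hc1 hc2
    by_contra hne
    obtain ⟨j1, j2, j3, h12, h13, h23, ⟨ha1, hb1⟩, ⟨ha2, hb2⟩, ⟨ha3, hb3⟩, w1, w2, w3⟩ :=
      five_avoid2_three F (c e1 p) (c e2 p)
    have cat : ∀ (j : γ), (∃ u v, c u v = j) →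
        (∃ w, c u₀ w = j) ∨ (∃ e, (∀ w w', c e w = c e w') ∧ c e p = j) := by
      rintro j ⟨x, y, hj⟩
      rcases rowsplit x with hcst | hg
      · exact Or.inr ⟨x, hcst, (hcst p y).trans hj⟩
      · exact Or.inl ⟨y, by rw [← hg y]; exact hj⟩
    have ing2 : ∀ (ja jb : γ), ja ≠ jb → ja ≠ c e1 p → ja ≠ c e2 p →
        jb ≠ c e1 p → jb ≠ c e2 p → (∃ w, c u₀ w = ja) → (∃ w, c u₀ w = jb) → False := by
      rintro ja jb hne' na1 na2 nb1 nb2 ⟨xa, hxa⟩ ⟨xb, hxb⟩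
      exact RB3 hR hc1 hc2 hne (x := xa) (y := xb)
        (by rw [hxa, hxb]; exact hne')
        (by rw [hxa]; exact na1) (by rw [hxa]; exact na2)
        (by rw [hxb]; exact nb1) (by rw [hxb]; exact nb2)
    have const2 : ∀ (ja jb : γ) (ea eb : Fin N), ja ≠ jb →
        ja ≠ c e1 p → ja ≠ c e2 p → jb ≠ c e1 p → jb ≠ c e2 p →
        (∀ w w', c ea w = c ea w') → c ea p = ja →
        (∀ w w', c eb w = c eb w') → c eb p = jb → False := by
      intro ja jb ea eb hne' na1 na2 nb1 nb2 hca hja hcb hjb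
      have use : ∀ x y : Fin N, c u₀ x ≠ c u₀ y →
          ¬(c u₀ x = ja ∨ c u₀ x = jb) → ¬(c u₀ y = ja ∨ c u₀ y = jb) → False := by
        intro x y gxy nx ny
        push_neg at nx ny
        exact RB3 hR hca hcb (x := x) (y := y)
          (by rw [hja, hjb]; exact hne') gxy
          (by rw [hja]; exact nx.1) (by rw [hjb]; exact nx.2)
          (by rw [hja]; exact ny.1) (by rw [hjb]; exact ny.2)
      have use2 : ∀ x y : Fin N, c u₀ x = ja → c u₀ y = jb → False := by
        intro x y hx hy
        exact RB3 hR hc1 hc2 (x := x) (y := y) hne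
          (by rw [hx, hy]; exact hne')
          (by rw [hx]; exact na1) (by rw [hx]; exact na2)
          (by rw [hy]; exact nb1) (by rw [hy]; exact nb2)
      by_cases hp' : c u₀ p = ja ∨ c u₀ p = jb
      · by_cases hq' : c u₀ q = ja ∨ c u₀ q = jb
        · rcases hp' with e | e <;> rcases hq' with e' | e'
          · exact hpq (e.trans e'.symm)
          · exact use2 p q e e'
          · exact use2 q p e' e
          · exact hpq (e.trans e'.symm)
        · by_cases hr' : c u₀ r = ja ∨ c u₀ r = jb
          · rcases hp' with e | e <;> rcases hr' with e' | e'
            · exact hpr (e.trans e'.symm)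
            · exact use2 p r e e'
            · exact use2 r p e' e
            · exact hpr (e.trans e'.symm)
          · exact use q r hqr hq' hr'
      · by_cases hq' : c u₀ q = ja ∨ c u₀ q = jb
        · by_cases hr' : c u₀ r = ja ∨ c u₀ r = jb
          · rcases hq' with e | e <;> rcases hr' with e' | e'
            · exact hqr (e.trans e'.symm)
            · exact use2 q r e e'
            · exact use2 r q e' e
            · exact hqr (e.trans e'.symm)
          · exact use p r hpr hp' hr'
        · exact use p q hpq hp' hq'
    rcases cat j1 w1 with g1 | ⟨ea1, hca1, hja1⟩ <;>
      rcases cat j2 w2 with g2 | ⟨ea2, hca2, hja2⟩ <;>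
        rcases cat j3 w3 with g3 | ⟨ea3, hca3, hja3⟩
    · exact ing2 j1 j2 h12 ha1 hb1 ha2 hb2 g1 g2
    · exact ing2 j1 j2 h12 ha1 hb1 ha2 hb2 g1 g2
    · exact ing2 j1 j3 h13 ha1 hb1 ha3 hb3 g1 g3
    · exact const2 j2 j3 ea2 ea3 h23 ha2 hb2 ha3 hb3 hca2 hja2 hca3 hja3
    · exact ing2 j2 j3 h23 ha2 hb2 ha3 hb3 g2 g3
    · exact const2 j1 j3 ea1 ea3 h13 ha1 hb1 ha3 hb3 hca1 hja1 hca3 hja3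
    · exact const2 j1 j2 ea1 ea2 h12 ha1 hb1 ha2 hb2 hca1 hja1 hca2 hja2
    · exact const2 j1 j2 ea1 ea2 h12 ha1 hb1 ha2 hb2 hca1 hja1 hca2 hja2
  by_cases hex : ∃ e : Fin N, ∀ w w', c e w = c e w'
  · obtain ⟨e₀, hce₀⟩ := hex
    refine ⟨c e₀ p, ?_, ?_⟩
    · intro w u u' hu hu'
      have hrow : ∀ v : Fin N, c v w ≠ c e₀ p → ∀ w', c v w' = c u₀ w' := by
        intro v hv
        rcases rowsplit v with hcst | hg
        · exact absurd ((hcst w p).trans (consts_eq v e₀ hcst hce₀)) hv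
        · exact hg
      rw [hrow u hu w, hrow u' hu' w]
    · rintro u u' ⟨w, w', hw, hw', hnuw⟩ ⟨v, v', hv, hv', hnuv⟩ w₀
      have hgu : ∀ x, c u x = c u₀ x := by
        rcases rowsplit u with hcst | hg
        · exact absurd (hcst w w') hnuw
        · exact hg
      have hgu' : ∀ x, c u' x = c u₀ x := by
        rcases rowsplit u' with hcst | hg
        · exact absurd (hcst v v') hnuv
        · exact hg
      rw [hgu w₀, hgu' w₀]
  · push_neg at hex
    have hall : ∀ u w, c u w = c u₀ w := by
      intro u
      rcases rowsplit u with hcst | hg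
      · obtain ⟨w, w', hne⟩ := hex u
        exact absurd (hcst w w') hne
      · exact hg
    exact ⟨c u₀ p, fun w u u' _ _ => by rw [hall u w, hall u' w],
      fun u u' _ _ w => by rw [hall u w, hall u' w]⟩

end CaseXMain


section CaseY

variable {c : Fin N → Fin N → γ}

/-- Two non-constant rows must share a common color. -/
lemma Yshare (hC : ROK (tr c)) (hN : 5 ≤ N) {u u' : Fin N}
    (hu : ∃ A B, c u A ≠ c u B) (hu' : ∃ A B, c u' A ≠ c u' B) :
    ∃ w w', c u w = c u' w' := by
  classical
  by_contra hdis
  push_neg at hdis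
  obtain ⟨A, B, hAB⟩ := hu
  obtain ⟨A', B', hA'B'⟩ := hu'
  have hne : u ≠ u' := fun e => hdis A A (by rw [e])
  have pat : ∀ a0 b0 c0 : Fin N, a0 ≠ b0 → a0 ≠ c0 → b0 ≠ c0 →
      c u a0 ≠ c u b0 → c u' b0 ≠ c u' c0 → False := by
    intro a0 b0 c0 n1 n2 n3 e1 e6
    exact hC a0 b0 c0 u u' n1 n2 n3 hne e1 (hdis a0 b0) (hdis a0 c0)
      (hdis b0 b0) (hdis b0 c0) e6
  obtain ⟨Z, hZ⟩ : ∃ Z, c u Z ≠ c u A' := by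
    by_cases e : c u A = c u A'
    · exact ⟨B, by rw [← e]; exact Ne.symm hAB⟩
    · exact ⟨A, e⟩
  have hZA' : Z ≠ A' := fun e => hZ (by rw [e])
  have hA'B'c : A' ≠ B' := fun e => hA'B' (by rw [e])
  by_cases hZB' : Z = B'
  · obtain ⟨Z', hZ'⟩ : ∃ Z', c u Z' ≠ c u B' := by
      by_cases e : c u A = c u Z
      · refine ⟨B, ?_⟩
        rw [← hZB', ← e]
        exact Ne.symm hAB
      · exact ⟨A, by rw [← hZB']; exact e⟩
    have hZ'B' : Z' ≠ B' := fun e => hZ' (by rw [e])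
    have hZ'Z : Z' ≠ Z := fun e => hZ' (by rw [e, hZB'])
    by_cases hZ'A' : Z' = A'
    · obtain ⟨X, hX1, hX2, -, -⟩ := exists_ne4 hN Z Z' Z Z'
      by_cases hXe : c u' X = c u' Z'
      · refine pat Z' Z X hZ'Z (Ne.symm hX2) (Ne.symm hX1) ?_ ?_
        · rw [hZB']; exact hZ'
        · rw [hZB', hXe, hZ'A']; exact Ne.symm hA'B'
      · refine pat Z Z' X (Ne.symm hZ'Z) (Ne.symm hX1) (Ne.symm hX2) ?_ ?_
        · rw [hZB']; exact Ne.symm hZ'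
        · exact Ne.symm hXe
    · exact pat Z' B' A' hZ'B' hZ'A' (Ne.symm hA'B'c) hZ' (Ne.symm hA'B')
  · exact pat Z A' B' hZA' hZB' hA'B'c hZ hA'B'

lemma caseY (hR : ROK c) (hC : ROK (tr c)) (hN : 5 ≤ N)
    (hYr : ∀ (u w1 w2 w3 : Fin N), c u w1 ≠ c u w2 → c u w1 ≠ c u w3 →
      c u w2 ≠ c u w3 → False)
    (hYc : ∀ (w u1 u2 u3 : Fin N), c u1 w ≠ c u2 w → c u1 w ≠ c u3 w →
      c u2 w ≠ c u3 w → False)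
    (F : Five c) : Wstruct c := by
  classical
  have row2 : ∀ (u w0 w1 : Fin N), c u w0 ≠ c u w1 → ∀ w,
      c u w = c u w0 ∨ c u w = c u w1 := by
    intro u w0 w1 hne w
    by_contra hcon
    push_neg at hcon
    exact hYr u w0 w1 w hne (Ne.symm hcon.1) (Ne.symm hcon.2)
  have consts_share : ∀ (e e' A : Fin N), (∀ w w', c e w = c e w') →
      (∀ w w', c e' w = c e' w') → c e A = c e' A := by
    intro e e' A hce hce'
    by_contra hvne
    obtain ⟨τ, ht1, ht2, -, x, y, hxy⟩ := five_avoid3_one F (c e A) (c e' A) (c e' A)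
    have h1 : c e y = c e A := hce y A
    have h2 : c e' y = c e' A := hce' y A
    apply hYc y e e' x
    · rw [h1, h2]; exact hvne
    · rw [h1, hxy]; exact fun ee => ht1 ee.symm
    · rw [h2, hxy]; exact fun ee => ht2 ee.symm
  obtain ⟨u₁, A₁, B₁, hAB₁⟩ : ∃ u A B, c u A ≠ c u B := by
    obtain ⟨i, inj, app⟩ := F
    obtain ⟨x1, y1, h1⟩ := app 0
    obtain ⟨x2, y2, h2⟩ := app 1
    by_contra hall
    push_neg at hall
    have e0 := consts_share x1 x2 y2 (fun w w' => hall x1 w w') (fun w w' => hall x2 w w')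
    have e1 : c x1 y2 = i 0 := (hall x1 y2 y1).trans h1
    rw [e1, h2] at e0
    exact inj.ne (show (0 : Fin 5) ≠ 1 by decide) e0
  obtain ⟨j1, j2, j3, h12, h13, h23, ⟨ha1, hb1⟩, ⟨ha2, hb2⟩, ⟨ha3, hb3⟩, W1, W2, W3⟩ :=
    five_avoid2_three F (c u₁ A₁) (c u₁ B₁)
  obtain ⟨x1, y1, hj1⟩ := W1
  obtain ⟨x2, y2, hj2⟩ := W2
  obtain ⟨x3, y3, hj3⟩ := W3
  have notboth : ∀ (xa ya xb yb : Fin N) (ja jb : γ), ja ≠ jb → c xa ya = ja →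
      c xb yb = jb → (∀ w w', c xa w = c xa w') → (∀ w w', c xb w = c xb w') → False := by
    intro xa ya xb yb ja jb hnejj ha hb hca hcb
    have e0 := consts_share xa xb ya hca hcb
    apply hnejj
    rw [← ha, e0, hcb ya yb, hb]
  have main2 : ∃ (Ra Rb : Fin N) (Ja Jb : γ) (Ya Yb : Fin N), Ja ≠ Jb ∧
      (Ja ≠ c u₁ A₁ ∧ Ja ≠ c u₁ B₁) ∧ (Jb ≠ c u₁ A₁ ∧ Jb ≠ c u₁ B₁) ∧
      c Ra Ya = Ja ∧ c Rb Yb = Jb ∧ (∃ a b, c Ra a ≠ c Ra b) ∧ (∃ a b, c Rb a ≠ c Rb b) := by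
    by_cases n1 : ∃ a b, c x1 a ≠ c x1 b
    · by_cases n2 : ∃ a b, c x2 a ≠ c x2 b
      · exact ⟨x1, x2, j1, j2, y1, y2, h12, ⟨ha1, hb1⟩, ⟨ha2, hb2⟩, hj1, hj2, n1, n2⟩
      · push_neg at n2
        by_cases n3 : ∃ a b, c x3 a ≠ c x3 b
        · exact ⟨x1, x3, j1, j3, y1, y3, h13, ⟨ha1, hb1⟩, ⟨ha3, hb3⟩, hj1, hj3, n1, n3⟩
        · push_neg at n3
          exact absurd (notboth x2 y2 x3 y3 j2 j3 h23 hj2 hj3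
            (fun w w' => n2 w w') (fun w w' => n3 w w')) id
    · push_neg at n1
      by_cases n2 : ∃ a b, c x2 a ≠ c x2 b
      · by_cases n3 : ∃ a b, c x3 a ≠ c x3 b
        · exact ⟨x2, x3, j2, j3, y2, y3, h23, ⟨ha2, hb2⟩, ⟨ha3, hb3⟩, hj2, hj3, n2, n3⟩
        · push_neg at n3
          exact absurd (notboth x1 y1 x3 y3 j1 j3 h13 hj1 hj3
            (fun w w' => n1 w w') (fun w w' => n3 w w')) id
      · push_neg at n2
        exact absurd (notboth x1 y1 x2 y2 j1 j2 h12 hj1 hj2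
          (fun w w' => n1 w w') (fun w w' => n2 w w')) id
  obtain ⟨Ra, Rb, Ja, Jb, Ya, Yb, hJab, ⟨hJa1, hJa2⟩, ⟨hJb1, hJb2⟩, hcRa, hcRb,
    hncRa, hncRb⟩ := main2
  obtain ⟨wa, hwa⟩ : ∃ w, c Ra w ≠ Ja := by
    obtain ⟨a, b, hab⟩ := hncRa
    by_cases e : c Ra a = Ja
    · exact ⟨b, by rw [← e]; exact Ne.symm hab⟩
    · exact ⟨a, e⟩
  obtain ⟨wb, hwb⟩ : ∃ w, c Rb w ≠ Jb := by
    obtain ⟨a, b, hab⟩ := hncRb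
    by_cases e : c Rb a = Jb
    · exact ⟨b, by rw [← e]; exact Ne.symm hab⟩
    · exact ⟨a, e⟩
  have rowA : ∀ w, c Ra w = Ja ∨ c Ra w = c Ra wa := by
    intro w
    rcases row2 Ra Ya wa (by rw [hcRa]; exact Ne.symm hwa) w with e | e
    · left; rw [e, hcRa]
    · right; exact e
  have rowB : ∀ w, c Rb w = Jb ∨ c Rb w = c Rb wb := by
    intro w
    rcases row2 Rb Yb wb (by rw [hcRb]; exact Ne.symm hwb) w with e | e
    · left; rw [e, hcRb]
    · right; exact e
  have hκa : c Ra wa = c u₁ A₁ ∨ c Ra wa = c u₁ B₁ := by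
    obtain ⟨w, w', hww⟩ := Yshare hC hN ⟨A₁, B₁, hAB₁⟩ hncRa
    have h1 := row2 u₁ A₁ B₁ hAB₁ w
    rcases rowA w' with e | e
    · rcases h1 with f | f
      · exact absurd ((f.symm.trans hww).trans e) (fun ee => hJa1 ee.symm)
      · exact absurd ((f.symm.trans hww).trans e) (fun ee => hJa2 ee.symm)
    · rcases h1 with f | f
      · left; rw [← e, ← hww, f]
      · right; rw [← e, ← hww, f]
  have hκb : c Rb wb = c u₁ A₁ ∨ c Rb wb = c u₁ B₁ := by
    obtain ⟨w, w', hww⟩ := Yshare hC hN ⟨A₁, B₁, hAB₁⟩ hncRb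
    have h1 := row2 u₁ A₁ B₁ hAB₁ w
    rcases rowB w' with e | e
    · rcases h1 with f | f
      · exact absurd ((f.symm.trans hww).trans e) (fun ee => hJb1 ee.symm)
      · exact absurd ((f.symm.trans hww).trans e) (fun ee => hJb2 ee.symm)
    · rcases h1 with f | f
      · left; rw [← e, ← hww, f]
      · right; rw [← e, ← hww, f]
  have hκab : c Ra wa = c Rb wb := by
    by_contra hneκ
    obtain ⟨w, w', hww⟩ := Yshare hC hN hncRa hncRb
    rcases rowA w with e | e <;> rcases rowB w' with e' | e'
    · exact hJab ((e.symm.trans hww).trans e')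
    · have hthis : Ja = c Rb wb := (e.symm.trans hww).trans e'
      rcases hκb with f | f
      · exact hJa1 (hthis.trans f)
      · exact hJa2 (hthis.trans f)
    · have hthis : c Ra wa = Jb := (e.symm.trans hww).trans e'
      rcases hκa with f | f
      · exact hJb1 (hthis.symm.trans f)
      · exact hJb2 (hthis.symm.trans f)
    · exact hneκ ((e.symm.trans hww).trans e')
  -- the dominant color
  set m : γ := c Ra wa with hm
  have hJam : Ja ≠ m := by
    rcases hκa with f | f
    · exact fun e => hJa1 (e.trans f)
    · exact fun e => hJa2 (e.trans f)
  have hJbm : Jb ≠ m := by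
    rcases hκb with f | f
    · exact fun e => hJb1 ((e.trans hκab).trans f)
    · exact fun e => hJb2 ((e.trans hκab).trans f)
  have claimM : ∀ u, (∃ a b, c u a ≠ c u b) → ∃ w, c u w = m := by
    intro u hnc
    obtain ⟨a0, b0, hab⟩ := hnc
    by_cases hma : c u a0 = m
    · exact ⟨a0, hma⟩
    by_cases hmb : c u b0 = m
    · exact ⟨b0, hmb⟩
    exfalso
    have hJa_in : c u a0 = Ja ∨ c u b0 = Ja := by
      obtain ⟨w, w', hww⟩ := Yshare hC hN ⟨a0, b0, hab⟩ hncRa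
      rcases rowA w' with e | e
      · rcases row2 u a0 b0 hab w with f | f
        · left; rw [← f, hww, e]
        · right; rw [← f, hww, e]
      · rcases row2 u a0 b0 hab w with f | f
        · exact absurd (f.symm.trans (hww.trans e)) hma
        · exact absurd (f.symm.trans (hww.trans e)) hmb
    have hJb_in : c u a0 = Jb ∨ c u b0 = Jb := by
      obtain ⟨w, w', hww⟩ := Yshare hC hN ⟨a0, b0, hab⟩ hncRb
      rcases rowB w' with e | e
      · rcases row2 u a0 b0 hab w with f | f
        · left; rw [← f, hww, e]
        · right; rw [← f, hww, e]
      · rcases row2 u a0 b0 hab w with f | f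
        · exact absurd (f.symm.trans (hww.trans (e.trans hκab.symm))) hma
        · exact absurd (f.symm.trans (hww.trans (e.trans hκab.symm))) hmb
    have hαβ_in : (c u a0 = c u₁ A₁ ∨ c u a0 = c u₁ B₁) ∨
        (c u b0 = c u₁ A₁ ∨ c u b0 = c u₁ B₁) := by
      obtain ⟨v, v', hvv⟩ := Yshare hC hN ⟨a0, b0, hab⟩ ⟨A₁, B₁, hAB₁⟩
      rcases row2 u a0 b0 hab v with f | f <;> rcases row2 u₁ A₁ B₁ hAB₁ v' with g | g
      · exact Or.inl (Or.inl (by rw [← f, hvv, g]))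
      · exact Or.inl (Or.inr (by rw [← f, hvv, g]))
      · exact Or.inr (Or.inl (by rw [← f, hvv, g]))
      · exact Or.inr (Or.inr (by rw [← f, hvv, g]))
    rcases hJa_in with ea | ea <;> rcases hJb_in with eb | eb
    · exact hJab (ea.symm.trans eb)
    · rcases hαβ_in with (f | f) | (f | f)
      · exact hJa1 (ea.symm.trans f)
      · exact hJa2 (ea.symm.trans f)
      · exact hJb1 (eb.symm.trans f)
      · exact hJb2 (eb.symm.trans f)
    · rcases hαβ_in with (f | f) | (f | f)
      · exact hJb1 (eb.symm.trans f)
      · exact hJb2 (eb.symm.trans f)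
      · exact hJa1 (ea.symm.trans f)
      · exact hJa2 (ea.symm.trans f)
    · exact hJab (ea.symm.trans eb)
  have constM : ∀ e, (∀ w w', c e w = c e w') → ∀ w, c e w = m := by
    intro e hce w
    by_contra hvm
    -- core helper with two fresh colors distinct from the constant value
    have core : ∀ (xa ya xb yb : Fin N) (Ja' Jb' : γ), Ja' ≠ Jb' →
        Ja' ≠ m → Jb' ≠ m → Ja' ≠ c e w → Jb' ≠ c e w →
        c xa ya = Ja' → c xb yb = Jb' → False := by
      intro xa ya xb yb Ja' Jb' hJab' hJam' hJbm' hJav hJbv hja' hjb'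
      have hnca : ∃ a b, c xa a ≠ c xa b := by
        by_contra hcc
        push_neg at hcc
        have e0 := consts_share e xa ya hce (fun a b => hcc a b)
        rw [hja'] at e0
        exact hJav ((hce ya w).symm.trans e0).symm
      have hncb : ∃ a b, c xb a ≠ c xb b := by
        by_contra hcc
        push_neg at hcc
        have e0 := consts_share e xb yb hce (fun a b => hcc a b)
        rw [hjb'] at e0
        exact hJbv ((hce yb w).symm.trans e0).symm
      obtain ⟨wma, hwma⟩ := claimM xa hnca
      obtain ⟨wmb, hwmb⟩ := claimM xb hncb
      have rowa : ∀ x, c xa x = Ja' ∨ c xa x = m := by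
        intro x
        rcases row2 xa ya wma (by rw [hja', hwma]; exact hJam') x with ee | ee
        · left; rw [ee, hja']
        · right; rw [ee, hwma]
      have rowb : ∀ x, c xb x = Jb' ∨ c xb x = m := by
        intro x
        rcases row2 xb yb wmb (by rw [hjb', hwmb]; exact hJbm') x with ee | ee
        · left; rw [ee, hjb']
        · right; rw [ee, hwmb]
      have hexa : e ≠ xa := by
        intro ee
        obtain ⟨a, b, hab⟩ := hnca
        exact hab (by rw [← ee]; exact hce a b)
      have hexb : e ≠ xb := by
        intro ee
        obtain ⟨a, b, hab⟩ := hncb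
        exact hab (by rw [← ee]; exact hce a b)
      by_cases hw2 : ∃ w2, c xa w2 = m ∧ c xb w2 = Jb'
      · obtain ⟨w2, hma', hmb'⟩ := hw2
        have hab' : xa ≠ xb := by
          intro ee
          rw [ee] at hma'
          rw [hma'] at hmb'
          exact hJbm' hmb'.symm
        have hya' : ya ≠ w2 := by
          intro ee
          rw [← ee] at hma'
          rw [hja'] at hma'
          exact hJam' hma'
        exact hR e xa xb ya w2 hexa hexb hab' hya'
          (by rw [hce ya w, hja']; exact fun ee => hJav ee.symm)
          (by rw [hce ya w, hma']; exact hvm)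
          (by rw [hce ya w, hmb']; exact fun ee => hJbv ee.symm)
          (by rw [hja', hma']; exact hJam')
          (by rw [hja', hmb']; exact hJab')
          (by rw [hma', hmb']; exact fun ee => hJbm' ee.symm)
      · push_neg at hw2
        have hxa_yb : c xa yb = Ja' := by
          rcases rowa yb with ee | ee
          · exact ee
          · exact absurd hjb' (hw2 yb ee)
        exact hYc yb e xa xb
          (by rw [hce yb w, hxa_yb]; exact fun ee => hJav ee.symm)
          (by rw [hce yb w, hjb']; exact fun ee => hJbv ee.symm)
          (by rw [hxa_yb, hjb']; exact hJab')
    -- pick two of j1 j2 j3 avoiding the constant value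
    have hj1m : j1 ≠ m := by
      rcases hκa with f | f
      · exact fun e => ha1 (e.trans f)
      · exact fun e => hb1 (e.trans f)
    have hj2m : j2 ≠ m := by
      rcases hκa with f | f
      · exact fun e => ha2 (e.trans f)
      · exact fun e => hb2 (e.trans f)
    have hj3m : j3 ≠ m := by
      rcases hκa with f | f
      · exact fun e => ha3 (e.trans f)
      · exact fun e => hb3 (e.trans f)
    by_cases d1 : j1 = c e w
    · -- then j2, j3 ≠ c e w
      have d2 : j2 ≠ c e w := fun ee => h12 (d1.trans ee.symm)
      have d3 : j3 ≠ c e w := fun ee => h13 (d1.trans ee.symm)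
      exact core x2 y2 x3 y3 j2 j3 h23 hj2m hj3m d2 d3 hj2 hj3
    · by_cases d2 : j2 = c e w
      · have d3 : j3 ≠ c e w := fun ee => h23 (d2.trans ee.symm)
        exact core x1 y1 x3 y3 j1 j3 h13 hj1m hj3m d1 d3 hj1 hj3
      · exact core x1 y1 x2 y2 j1 j2 h12 hj1m hj2m d1 d2 hj1 hj2
  refine ⟨m, ?_, ?_⟩
  · intro w u u' hu hu'
    by_contra hne
    have hncu : ∃ a b, c u a ≠ c u b := by
      by_contra hcc
      push_neg at hcc
      exact hu (constM u (fun a b => hcc a b) w)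
    have hncu' : ∃ a b, c u' a ≠ c u' b := by
      by_contra hcc
      push_neg at hcc
      exact hu' (constM u' (fun a b => hcc a b) w)
    obtain ⟨wmu, hwmu⟩ := claimM u hncu
    obtain ⟨wmu', hwmu'⟩ := claimM u' hncu'
    have rowu : ∀ x', c u x' = c u w ∨ c u x' = m := by
      intro x'
      rcases row2 u w wmu (by rw [hwmu]; exact hu) x' with e | e
      · exact Or.inl e
      · right; rw [e, hwmu]
    have rowu' : ∀ x', c u' x' = c u' w ∨ c u' x' = m := by
      intro x'
      rcases row2 u' w wmu' (by rw [hwmu']; exact hu') x' with e | e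
      · exact Or.inl e
      · right; rw [e, hwmu']
    obtain ⟨z, hz1, hz2, hz3, rz, sz, hrz⟩ := five_avoid3_one F (c u w) (c u' w) m
    have hncrz : ∃ a b, c rz a ≠ c rz b := by
      by_contra hcc
      push_neg at hcc
      have e0 := constM rz (fun a b => hcc a b) sz
      exact hz3 (hrz.symm.trans e0)
    obtain ⟨wmz, hwmz⟩ := claimM rz hncrz
    have rowz : ∀ x', c rz x' = z ∨ c rz x' = m := by
      intro x'
      rcases row2 rz sz wmz (by rw [hrz, hwmz]; exact hz3) x' with e | e
      · left; rw [e, hrz]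
      · right; rw [e, hwmz]
    have hu'sz : c u' sz ≠ c rz sz := by
      rcases rowu' sz with e | e <;> rw [e, hrz]
      · exact fun ee => hz2 ee.symm
      · exact fun ee => hz3 ee.symm
    have hcusz : c u sz = m := by
      rcases rowu sz with e | e
      · exfalso
        apply hYc sz u rz u'
        · rw [e, hrz]; exact fun ee => hz1 ee.symm
        · rcases rowu' sz with e' | e' <;> rw [e, e']
          · exact hne
          · exact hu
        · exact Ne.symm hu'sz
      · exact e
    exact hR u' u rz w sz (fun e => hne (by rw [e]))
      (fun e => hu'sz (by rw [e]))
      (fun e => hz3 (by rw [← hrz, ← e]; exact hcusz))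
      (fun e => hu (by rw [e]; exact hcusz))
      (Ne.symm hne)
      (by rw [hcusz]; exact hu')
      (by rw [hrz]; exact fun ee => hz2 ee.symm)
      (by rw [hcusz]; exact hu)
      (by rw [hrz]; exact fun ee => hz1 ee.symm)
      (by rw [hcusz, hrz]; exact fun ee => hz3 ee.symm)
  · rintro u u' ⟨w, w', hw, hw', hnuw⟩ - w₀
    exfalso
    obtain ⟨wm, hwm⟩ := claimM u ⟨w, w', hnuw⟩
    rcases row2 u w w' hnuw wm with e | e
    · exact hw (e.symm.trans hwm)
    · exact hw' (e.symm.trans hwm)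

end CaseY


section Struct

variable {c : Fin N → Fin N → γ}

theorem structW (hR : ROK c) (hC : ROK (tr c)) (hN : 5 ≤ N) (F : Five c) :
    Wstruct c ∨ Wstruct (tr c) := by
  by_cases hX : ∃ u w1 w2 w3 : Fin N, c u w1 ≠ c u w2 ∧ c u w1 ≠ c u w3 ∧ c u w2 ≠ c u w3
  · obtain ⟨u₀, p, q, r, h1, h2, h3⟩ := hX
    exact Or.inl (caseX hR hC hN F h1 h2 h3)
  · by_cases hXc : ∃ v u1 u2 u3 : Fin N,
        c u1 v ≠ c u2 v ∧ c u1 v ≠ c u3 v ∧ c u2 v ≠ c u3 v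
    · obtain ⟨v, u1, u2, u3, h1, h2, h3⟩ := hXc
      exact Or.inr (caseX hC (show ROK (tr (tr c)) from hR) hN (five_tr F) h1 h2 h3)
    · push_neg at hX hXc
      refine Or.inl (caseY hR hC hN ?_ ?_ F)
      · intro u w1 w2 w3 e1 e2 e3
        exact e3 (hX u w1 w2 w3 e1 e2)
      · intro w u1 u2 u3 e1 e2 e3
        exact e3 (hXc w u1 u2 u3 e1 e2)

end Struct

section Counting

theorem monoOfW {k t : ℕ} {c : Fin N → Fin N → Fin k} (ht : 3 ≤ t) (hk : t + 2 ≤ k)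
    (hN : k * (t - 1) + 1 ≤ N) (hsurj : ∀ i : Fin k, ∃ u v, c u v = i)
    (hW : Wstruct c) : hasMonoKst c t t := by
  classical
  obtain ⟨m, hWa, hWb⟩ := hW
  by_contra hmono
  have hA5 : 5 * (t - 1) ≤ k * (t - 1) := Nat.mul_le_mul_right _ (by omega)
  have hNuniv : (Finset.univ : Finset (Fin N)).card = N := by simp
  set G : Finset (Fin N) := Finset.univ.filter
    (fun u => ∃ w w', c u w ≠ m ∧ c u w' ≠ m ∧ c u w ≠ c u w') with hG
  have build : ∀ (i : Fin k) (S T : Finset (Fin N)), t ≤ S.card → t ≤ T.card →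
      (∀ u ∈ S, ∀ v ∈ T, c u v = i) → False := by
    intro i S T hS hT hall
    obtain ⟨S', hS'sub, hS'⟩ := Finset.exists_subset_card_eq hS
    obtain ⟨T', hT'sub, hT'⟩ := Finset.exists_subset_card_eq hT
    exact hmono ⟨i, S', T', Or.inl ⟨hS', hT'⟩,
      fun u hu v hv => hall u (hS'sub hu) v (hT'sub hv)⟩
  by_cases hGcard : t ≤ G.card
  · have hGne : G.Nonempty := Finset.card_pos.mp (by omega)
    obtain ⟨u₀, hu₀⟩ := hGne
    have hu₀' := (Finset.mem_filter.mp hu₀).2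
    have hfib : ∃ i : Fin k, t - 1 < (Finset.univ.filter (fun w => c u₀ w = i)).card := by
      have hmaps : ∀ a ∈ (Finset.univ : Finset (Fin N)),
          (fun w => c u₀ w) a ∈ (Finset.univ : Finset (Fin k)) := fun a _ => Finset.mem_univ _
      have hlt : (Finset.univ : Finset (Fin k)).card * (t - 1) <
          (Finset.univ : Finset (Fin N)).card := by
        simp only [Finset.card_univ, Fintype.card_fin]
        omega
      obtain ⟨b, -, hb⟩ :=
        Finset.exists_lt_card_fiber_of_mul_lt_card_of_maps_to hmaps hlt
      exact ⟨b, hb⟩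
    obtain ⟨i, hi⟩ := hfib
    apply build i G (Finset.univ.filter (fun w => c u₀ w = i)) hGcard (by omega)
    intro u hu v hv
    have huG := (Finset.mem_filter.mp hu).2
    have hv' := (Finset.mem_filter.mp hv).2
    rw [← hv']
    exact hWb u u₀ huG hu₀' v
  · push_neg at hGcard
    set Col : Fin k → Finset (Fin N) :=
      fun s => Finset.univ.filter (fun w => ∃ u, c u w = s) with hCol
    set Rs : Fin k → Finset (Fin N) :=
      fun s => Finset.univ.filter (fun u => u ∉ G ∧ ∃ w, c u w = s) with hRs
    have colmem : ∀ (s : Fin k) (w : Fin N), w ∈ Col s ↔ ∃ u, c u w = s := by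
      intro s w
      rw [hCol]
      simp only [Finset.mem_filter, Finset.mem_univ, true_and]
    have coluniq : ∀ (s s' : Fin k), s ≠ m → s' ≠ m → ∀ w, w ∈ Col s → w ∈ Col s' →
        s = s' := by
      intro s s' hs hs' w hw hw'
      obtain ⟨u, hu⟩ := (colmem s w).mp hw
      obtain ⟨u', hu'⟩ := (colmem s' w).mp hw'
      rw [← hu, ← hu']
      exact hWa w u u' (by rw [hu]; exact hs) (by rw [hu']; exact hs')
    have rowval : ∀ u, u ∉ G → ∀ w w', c u w ≠ m → c u w' ≠ m → c u w = c u w' := by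
      intro u hu w w' h1 h2
      by_contra hne
      exact hu (Finset.mem_filter.mpr ⟨Finset.mem_univ _, w, w', h1, h2, hne⟩)
    have C1 : ∀ s : Fin k, s ≠ m → t ≤ (Col s).card → N - t < (G ∪ Rs s).card := by
      intro s hs hcs
      by_contra hle
      push_neg at hle
      have hcompl : t ≤ (Finset.univ \ (G ∪ Rs s)).card := by
        rw [Finset.card_sdiff_of_subset (Finset.subset_univ _), hNuniv]
        have := Finset.card_le_univ (G ∪ Rs s)
        omega
      apply build m (Finset.univ \ (G ∪ Rs s)) (Col s) hcompl hcs
      intro u hu v hv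
      by_contra hum
      have huG : u ∉ G ∧ u ∉ Rs s := by
        have h0 := (Finset.mem_sdiff.mp hu).2
        rw [Finset.mem_union] at h0
        push_neg at h0
        exact h0
      obtain ⟨u', hu'⟩ := (colmem s v).mp hv
      have hval : c u v = s := by
        rw [← hu']
        exact hWa v u u' hum (by rw [hu']; exact hs)
      exact huG.2 (Finset.mem_filter.mpr ⟨Finset.mem_univ _, huG.1, v, hval⟩)
    by_cases hs : ∃ s : Fin k, s ≠ m ∧ t ≤ (Col s).card
    · obtain ⟨s, hsm, hcs⟩ := hs
      have hRsbig : N - 2*t + 2 ≤ (Rs s).card := by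
        have h1 := C1 s hsm hcs
        have h2 : (G ∪ Rs s).card ≤ G.card + (Rs s).card := Finset.card_union_le _ _
        omega
      by_cases hcs2 : (Col s).card ≤ N - t
      · have hTcard : t ≤ (Finset.univ \ Col s).card := by
          rw [Finset.card_sdiff_of_subset (Finset.subset_univ _), hNuniv]
          omega
        have hScard : t ≤ (Rs s).card := by omega
        apply build m (Rs s) (Finset.univ \ Col s) hScard hTcard
        intro u hu v hv
        by_contra hum
        have hu2 := (Finset.mem_filter.mp hu).2
        obtain ⟨huG, w₀, hw₀⟩ := hu2
        have hval : c u v = s :=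
          (rowval u huG v w₀ hum (by rw [hw₀]; exact hsm)).trans hw₀
        exact (Finset.mem_sdiff.mp hv).2 ((colmem s v).mpr ⟨u, hval⟩)
      · push_neg at hcs2
        set Rest : Finset (Fin k) := (Finset.univ.erase m).erase s with hRest
        have hsmem : s ∈ Finset.univ.erase m := Finset.mem_erase.mpr ⟨hsm, Finset.mem_univ _⟩
        have hRestcard : Rest.card = k - 2 := by
          rw [hRest, Finset.card_erase_of_mem hsmem,
            Finset.card_erase_of_mem (Finset.mem_univ m), Finset.card_univ, Fintype.card_fin]
          omega
        have hRestne : ∀ x ∈ Rest, x ≠ m ∧ x ≠ s := by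
          intro x hx
          rw [hRest] at hx
          exact ⟨Finset.ne_of_mem_erase (Finset.mem_of_mem_erase hx), Finset.ne_of_mem_erase hx⟩
        have hdisj : ∀ x ∈ Rest, ∀ y ∈ Rest, x ≠ y → Disjoint (Col x) (Col y) := by
          intro x hx y hy hxy
          rw [Finset.disjoint_left]
          intro w hwx hwy
          exact hxy (coluniq x y (hRestne x hx).1 (hRestne y hy).1 w hwx hwy)
        have hsub : Rest.biUnion Col ⊆ Finset.univ \ Col s := by
          intro w hw
          rw [Finset.mem_biUnion] at hw
          obtain ⟨x, hx, hwx⟩ := hw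
          rw [Finset.mem_sdiff]
          refine ⟨Finset.mem_univ _, fun hws => ?_⟩
          exact (hRestne x hx).2 (coluniq x s (hRestne x hx).1 hsm w hwx hws)
        have hbiU : k - 2 ≤ (Rest.biUnion Col).card := by
          rw [Finset.card_biUnion hdisj]
          calc k - 2 = Rest.card * 1 := by omega
          _ = ∑ _x ∈ Rest, 1 := by rw [Finset.sum_const, smul_eq_mul]
          _ ≤ ∑ x ∈ Rest, (Col x).card := by
              apply Finset.sum_le_sum
              intro x hx
              obtain ⟨u, v, huv⟩ := hsurj x
              have : v ∈ Col x := (colmem x v).mpr ⟨u, huv⟩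
              exact Finset.card_pos.mpr ⟨v, this⟩
        have hle := Finset.card_le_card hsub
        rw [Finset.card_sdiff_of_subset (Finset.subset_univ _), hNuniv] at hle
        have := Finset.card_le_univ (Col s)
        omega
    · push_neg at hs
      set Clean : Finset (Fin N) := Finset.univ.filter (fun w => ∀ u, c u w = m) with hClean
      have hCleancard : Clean.card ≤ t - 1 := by
        by_contra hc
        push_neg at hc
        apply build m Finset.univ Clean (by omega) (by omega)
        intro u _ v hv
        exact (Finset.mem_filter.mp hv).2 u
      have hcover : Finset.univ ⊆ Clean ∪ (Finset.univ.erase m).biUnion Col := by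
        intro w _
        by_cases hcl : ∀ u, c u w = m
        · exact Finset.mem_union_left _ (Finset.mem_filter.mpr ⟨Finset.mem_univ _, hcl⟩)
        · push_neg at hcl
          obtain ⟨u, hu⟩ := hcl
          refine Finset.mem_union_right _ (Finset.mem_biUnion.mpr ⟨c u w, ?_, ?_⟩)
          · exact Finset.mem_erase.mpr ⟨hu, Finset.mem_univ _⟩
          · exact (colmem (c u w) w).mpr ⟨u, rfl⟩
      have hcard := Finset.card_le_card hcover
      have hcardU := Finset.card_union_le Clean ((Finset.univ.erase m).biUnion Col)
      have hbi : ((Finset.univ.erase m).biUnion Col).card ≤ (k-1) * (t-1) := by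
        apply le_trans (Finset.card_biUnion_le)
        have hbd : ∀ x ∈ Finset.univ.erase m, (Col x).card ≤ t - 1 := by
          intro x hx
          have := hs x (Finset.ne_of_mem_erase hx)
          omega
        calc ∑ x ∈ Finset.univ.erase m, (Col x).card
            ≤ ∑ _x ∈ Finset.univ.erase m, (t-1) := Finset.sum_le_sum hbd
        _ = (k-1) * (t-1) := by
            rw [Finset.sum_const, smul_eq_mul,
              Finset.card_erase_of_mem (Finset.mem_univ m), Finset.card_univ, Fintype.card_fin]
      have harith : (t-1) + (k-1)*(t-1) = k*(t-1) := by
        obtain ⟨k', rfl⟩ : ∃ k', k = k' + 1 := ⟨k-1, by omega⟩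
        simp only [Nat.add_sub_cancel]
        ring
      rw [hNuniv] at hcard
      omega

end Counting

end BGR

section Assembly

lemma mainUpper {k t N : ℕ} (ht : 3 ≤ t) (hk : t + 2 ≤ k) (hN : k * (t-1) + 1 ≤ N)
    (c : Fin N → Fin N → Fin k) (hsurj : ∀ i, ∃ u v, c u v = i)
    (hnr : ¬ hasRainbowP5 c) : hasMonoKst c t t := by
  have hR : BGR.ROK c := BGR.rok_of_not (fun h => hnr (Or.inl h))
  have hC : BGR.ROK (BGR.tr c) := BGR.rok_of_not (fun h => hnr (Or.inr h))
  have hk5 : 5 ≤ k := by omega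
  have hN5 : 5 ≤ N := by
    have h10 : 5 * 2 ≤ k * (t-1) := Nat.mul_le_mul (by omega) (by omega)
    omega
  have F : BGR.Five c := ⟨fun j => Fin.castLE hk5 j, Fin.castLE_injective hk5,
    fun j => hsurj _⟩
  rcases BGR.structW hR hC hN5 F with hW | hW
  · exact BGR.monoOfW ht hk hN hsurj hW
  · have hmt : hasMonoKst (BGR.tr c) t t := by
      refine BGR.monoOfW ht hk hN (fun i => ?_) hW
      obtain ⟨u, v, h⟩ := hsurj i
      exact ⟨v, u, h⟩
    obtain ⟨i, S, T, hor, hall⟩ := hmt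
    refine ⟨i, T, S, ?_, fun u hu v hv => hall v hv u hu⟩
    rcases hor with ⟨h1, h2⟩ | ⟨h1, h2⟩
    · exact Or.inl ⟨h2, h1⟩
    · exact Or.inl ⟨h2, h1⟩

end Assembly


/-- for `t ≥ 3` and `k ≥ t + 2`, `bgr_k(P₅ : K_{t,t}) = kt − k + 1`. -/
theorem stmt12 (k t : ℕ) (ht : 3 ≤ t) (hk : t + 2 ≤ k) :
    bgrP5Ktt k t (k * t - k + 1) ∧
    (∀ n : ℕ, bgrP5Ktt k t n → k * t - k + 1 ≤ n) := by
  classical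
  have heq : k * t - k = k * (t - 1) := by
    obtain ⟨t', rfl⟩ : ∃ t', t = t' + 1 := ⟨t-1, by omega⟩
    have h1 : k * (t' + 1) = k * t' + k := Nat.mul_succ k t'
    simp only [Nat.add_sub_cancel]
    omega
  constructor
  · constructor
    · -- k ≤ (k*t - k + 1)^2
      have h3 : k * 3 ≤ k * t := Nat.mul_le_mul_left k ht
      have h1 : k ≤ k*t - k + 1 := by omega
      calc k ≤ k*t - k + 1 := h1
        _ ≤ (k*t - k + 1)^2 := Nat.le_self_pow (by norm_num) _
    · intro N hN c hsurj
      by_cases hr : hasRainbowP5 c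
      · exact Or.inl hr
      · refine Or.inr (mainUpper ht hk ?_ c hsurj hr)
        omega
  · intro n hbgr
    by_contra hlt
    push_neg at hlt
    have hpos : 0 < t - 1 := by omega
    have hN₀pos : 0 < k * (t-1) := Nat.mul_pos (by omega) hpos
    have hdiv : ∀ v : Fin (k * (t-1)), v.val / (t-1) < k := by
      intro v
      have hvl := v.isLt
      have hcm : k * (t-1) = (t-1) * k := Nat.mul_comm _ _
      exact Nat.div_lt_of_lt_mul (by omega)
    set c₀ : Fin (k * (t-1)) → Fin (k * (t-1)) → Fin k :=
      fun _ v => ⟨v.val / (t-1), hdiv v⟩ with hc₀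
    have hnr : ¬ hasRainbowP5 c₀ := by
      rintro (⟨u1,u2,u3,v1,v2,_,_,_,_,e1,_,_,_,_,_⟩ | ⟨u1,u2,u3,v1,v2,_,_,_,_,_,_,_,e4,_,_⟩)
      · exact e1 rfl
      · exact e4 rfl
    have hsurj₀ : ∀ i : Fin k, ∃ u v, c₀ u v = i := by
      intro i
      have hlt' : i.val * (t-1) < k * (t-1) := by
        apply Nat.mul_lt_mul_of_lt_of_le i.isLt (le_refl (t-1)) hpos
      refine ⟨⟨0, hN₀pos⟩, ⟨i.val * (t-1), hlt'⟩, ?_⟩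
      apply Fin.ext
      show (i.val * (t-1)) / (t-1) = i.val
      exact Nat.mul_div_cancel i.val hpos
    have hnm : ¬ hasMonoKst c₀ t t := by
      rintro ⟨i, S, T, hor, hall⟩
      have hT : T.card = t := by rcases hor with ⟨-, h⟩ | ⟨-, h⟩ <;> exact h
      have hS : 0 < S.card := by rcases hor with ⟨h, -⟩ | ⟨h, -⟩ <;> omega
      obtain ⟨u, hu⟩ := Finset.card_pos.mp hS
      have hsubT : T ⊆ Finset.univ.filter
          (fun v : Fin (k * (t-1)) => v.val / (t-1) = i.val) := by
        intro v hv
        rw [Finset.mem_filter]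
        exact ⟨Finset.mem_univ _, congrArg Fin.val (hall u hu v hv)⟩
      have hfib : (Finset.univ.filter
          (fun v : Fin (k * (t-1)) => v.val / (t-1) = i.val)).card ≤ t - 1 := by
        have hmaps : ∀ v ∈ Finset.univ.filter
            (fun v : Fin (k * (t-1)) => v.val / (t-1) = i.val),
            v.val % (t-1) ∈ Finset.range (t-1) := by
          intro v _
          exact Finset.mem_range.mpr (Nat.mod_lt _ hpos)
        have hinj : ∀ x ∈ Finset.univ.filter
            (fun v : Fin (k * (t-1)) => v.val / (t-1) = i.val),
            ∀ y ∈ Finset.univ.filter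
            (fun v : Fin (k * (t-1)) => v.val / (t-1) = i.val),
            x.val % (t-1) = y.val % (t-1) → x = y := by
          intro x hx y hy hmod
          have hxv := (Finset.mem_filter.mp hx).2
          have hyv := (Finset.mem_filter.mp hy).2
          apply Fin.ext
          have e1 : x.val = (t-1) * (x.val / (t-1)) + x.val % (t-1) :=
            (Nat.div_add_mod x.val (t-1)).symm
          have e2 : y.val = (t-1) * (y.val / (t-1)) + y.val % (t-1) :=
            (Nat.div_add_mod y.val (t-1)).symm
          rw [e1, e2, hxv, hyv, hmod]
        have := Finset.card_le_card_of_injOn _ hmaps hinj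
        rw [Finset.card_range] at this
        exact this
      have := Finset.card_le_card hsubT
      omega
    have hle : n ≤ k * (t-1) := by omega
    rcases hbgr.2 (k * (t-1)) hle c₀ hsurj₀ with h | h
    · exact hnr h
    · exact hnm h
end

section
/- For integers t ≥ 3, k ≥ t + 2, and n = kt − k, there exists an edge-coloring of K_{n,n} = G(U,V) with exactly k colors containing no rainbow P_5 and no monochromatic K_{t,t}: partition V into k parts of size t − 1 and color all edges from U to the i-th part with color i. -/
open Function Finset SimpleGraph

/-- for `t ≥ 3`, `k ≥ t + 2` and `n = kt − k`, partitioning `V` into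
`k` parts of size `t − 1` and coloring all edges from `U` to the `i`-th part with
color `i` yields an exact `k`-coloring of `K_{n,n}` with no rainbow `P₅` and no
monochromatic `K_{t,t}`. -/
theorem stmt13 (k t : ℕ) (ht : 3 ≤ t) (hk : t + 2 ≤ k) :
    ∃ p : Fin (k * t - k) → Fin k,
      (∀ i : Fin k, (Finset.univ.filter (fun v => p v = i)).card = t - 1) ∧
      ¬ hasRainbowP5 (fun (_ v : Fin (k * t - k)) => p v) ∧
      ¬ hasMonoKst (fun (_ v : Fin (k * t - k)) => p v) t t := by
  have hN : k * t - k = k * (t - 1) := by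
    rw [Nat.mul_sub, mul_one]
  let e : Fin (k * t - k) ≃ Fin k × Fin (t - 1) :=
    (finCongr hN).trans finProdFinEquiv.symm
  have hcard : ∀ i : Fin k,
      (Finset.univ.filter (fun v => (e v).1 = i)).card = t - 1 := by
    intro i
    have h1 := Finset.card_equiv e
      (s := Finset.univ.filter (fun v => (e v).1 = i))
      (t := Finset.univ.filter fun x : Fin k × Fin (t-1) => x.1 = i)
      (fun v => by simp)
    have h2 : (Finset.univ.filter fun x : Fin k × Fin (t-1) => x.1 = i)
        = {i} ×ˢ (Finset.univ : Finset (Fin (t-1))) := by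
      ext x; simp [Finset.mem_product, Prod.ext_iff, eq_comm]
    rw [h1, h2, Finset.card_product]
    simp
  refine ⟨fun v => (e v).1, hcard, ?_, ?_⟩
  · rintro (⟨u₁,u₂,u₃,v₁,v₂,_,_,_,_,h1,_⟩ | ⟨u₁,u₂,u₃,v₁,v₂,_,_,_,_,_,_,_,h4,_⟩)
    · exact h1 rfl
    · exact h4 rfl
  · rintro ⟨i, S, T, hST, hall⟩
    obtain ⟨u, hu⟩ : S.Nonempty :=
      Finset.card_pos.mp (by rcases hST with ⟨h,_⟩|⟨h,_⟩ <;> omega)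
    have hsub : T ⊆ Finset.univ.filter fun v => (e v).1 = i := fun v hv => by
      simpa using hall u hu v hv
    have hle := Finset.card_le_card hsub
    rw [hcard i] at hle
    rcases hST with ⟨_,h⟩|⟨_,h⟩ <;> omega
end

section
/- For integers t ≥ 5 and t ≤ k ≤ t + 1, bgr_k(K_{1,3} : K_{1,t}) = t + 1. -/
open Function Finset SimpleGraph

/-- `n` witnesses the bipartite Gallai–Ramsey property for a rainbow `K_{1,3}`
versus a monochromatic `K_{1,t}` with `k` colors. -/
def bgrK13K1t (k t n : ℕ) : Prop :=
  k ≤ n ^ 2 ∧ ∀ N : ℕ, n ≤ N → ∀ c : Fin N → Fin N → Fin k,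
    (∀ i : Fin k, ∃ u v, c u v = i) →
    hasRainbowK13 c ∨ hasMonoKst c 1 t

lemma key_lemma_s14 {α : Type*} (a b d : α) (hab : a ≠ b) (hda : d ≠ a) (hdb : d ≠ b) :
    ∀ p q : α,
      (a = p ∨ a = q ∨ b = p ∨ b = q) →
      (b = p ∨ b = q ∨ d = p ∨ d = q) →
      (a = p ∨ a = q ∨ d = p ∨ d = q) →
      (p = a ∨ p = b ∨ p = d) ∧ (q = a ∨ q = b ∨ q = d) := by
  intro p q h1 h2 h3
  constructor
  · by_contra hp
    push_neg at hp
    obtain ⟨hp1, hp2, hp3⟩ := hp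
    rcases h1 with e | e | e | e <;> rcases h2 with f | f | f | f <;>
      rcases h3 with g | g | g | g <;> simp_all
  · by_contra hq
    push_neg at hq
    obtain ⟨hq1, hq2, hq3⟩ := hq
    rcases h1 with e | e | e | e <;> rcases h2 with f | f | f | f <;>
      rcases h3 with g | g | g | g <;> simp_all

lemma upper_aux (k t N : ℕ) (ht : 5 ≤ t) (hk1 : t ≤ k) (hN : t + 1 ≤ N)
    (c : Fin N → Fin N → Fin k) (hsurj : ∀ i : Fin k, ∃ u v, c u v = i)
    (hrb : ¬ hasRainbowK13 c) (hmono : ¬ hasMonoKst c 1 t) : False := by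
  have hN0 : 0 < N := by omega
  set v0 : Fin N := ⟨0, hN0⟩ with hv0
  -- no rainbow star in rows/columns
  have hrow3 : ∀ u v1 v2 v3 : Fin N,
      c u v1 = c u v2 ∨ c u v1 = c u v3 ∨ c u v2 = c u v3 := by
    intro u v1 v2 v3; by_contra h; push_neg at h
    exact hrb (Or.inl ⟨u, v1, v2, v3, h.1, h.2.1, h.2.2⟩)
  have hcol3 : ∀ (v u1 u2 u3 : Fin N),
      c u1 v = c u2 v ∨ c u1 v = c u3 v ∨ c u2 v = c u3 v := by
    intro v u1 u2 u3; by_contra h; push_neg at h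
    exact hrb (Or.inr ⟨v, u1, u2, u3, h.1, h.2.1, h.2.2⟩)
  -- each color appears < t times in each row/column
  have hmonoRow : ∀ (u : Fin N) (i : Fin k),
      (univ.filter fun v => c u v = i).card < t := by
    intro u i; by_contra h; push_neg at h
    obtain ⟨T, hT, hTc⟩ := Finset.exists_subset_card_eq h
    refine hmono ⟨i, {u}, T, Or.inl ⟨Finset.card_singleton u, hTc⟩, ?_⟩
    intro u' hu' v hv
    rw [Finset.mem_singleton] at hu'; subst hu'
    exact (Finset.mem_filter.mp (hT hv)).2
  have hmonoCol : ∀ (v : Fin N) (i : Fin k),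
      (univ.filter fun u => c u v = i).card < t := by
    intro v i; by_contra h; push_neg at h
    obtain ⟨S, hS, hSc⟩ := Finset.exists_subset_card_eq h
    refine hmono ⟨i, S, {v}, Or.inr ⟨hSc, Finset.card_singleton v⟩, ?_⟩
    intro u hu v' hv'
    rw [Finset.mem_singleton] at hv'; subst hv'
    exact (Finset.mem_filter.mp (hS hu)).2
  -- each row has a second color
  have hrow2 : ∀ u : Fin N, ∃ b : Fin k, b ≠ c u v0 ∧
      ∀ v, c u v = c u v0 ∨ c u v = b := by
    intro u
    have hne : ∃ v1, c u v1 ≠ c u v0 := by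
      by_contra h; push_neg at h
      have heq : (univ.filter fun v => c u v = c u v0) = univ :=
        Finset.eq_univ_of_forall (fun v => Finset.mem_filter.mpr ⟨Finset.mem_univ v, h v⟩)
      have hlt := hmonoRow u (c u v0)
      rw [heq, Finset.card_univ, Fintype.card_fin] at hlt
      omega
    obtain ⟨v1, hv1⟩ := hne
    refine ⟨c u v1, hv1, fun v => ?_⟩
    rcases hrow3 u v0 v1 v with h | h | h
    · exact absurd h.symm hv1
    · exact Or.inl h.symm
    · exact Or.inr h.symm
  have hcol2 : ∀ v : Fin N, ∃ b : Fin k, b ≠ c v0 v ∧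
      ∀ u, c u v = c v0 v ∨ c u v = b := by
    intro v
    have hne : ∃ u1, c u1 v ≠ c v0 v := by
      by_contra h; push_neg at h
      have heq : (univ.filter fun u => c u v = c v0 v) = univ :=
        Finset.eq_univ_of_forall (fun u => Finset.mem_filter.mpr ⟨Finset.mem_univ u, h u⟩)
      have hlt := hmonoCol v (c v0 v)
      rw [heq, Finset.card_univ, Fintype.card_fin] at hlt
      omega
    obtain ⟨u1, hu1⟩ := hne
    refine ⟨c u1 v, hu1, fun u => ?_⟩
    rcases hcol3 v v0 u1 u with h | h | h
    · exact absurd h.symm hu1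
    · exact Or.inl h.symm
    · exact Or.inr h.symm
  choose rb hrbne Hrow using hrow2
  choose cb hcbne Hcol using hcol2
  set ra : Fin N → Fin k := fun u => c u v0 with hra
  set ca : Fin N → Fin k := fun v => c v0 v with hca
  -- coverage restated
  have Hrow' : ∀ u v, c u v = ra u ∨ c u v = rb u := Hrow
  have Hcol' : ∀ u v, c u v = ca v ∨ c u v = cb v := fun u v => Hcol v u
  -- small-palette contradictions
  have small4 : ∀ s1 s2 s3 s4 : Fin k,
      (∀ u v, c u v = s1 ∨ c u v = s2 ∨ c u v = s3 ∨ c u v = s4) → False := by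
    intro s1 s2 s3 s4 h
    have hsub : (univ : Finset (Fin k)) ⊆ {s1, s2, s3, s4} := by
      intro i _
      obtain ⟨u, v, huv⟩ := hsurj i
      have := h u v
      rw [huv] at this
      simp only [Finset.mem_insert, Finset.mem_singleton]
      tauto
    have h1 := Finset.card_le_card hsub
    have h2 : ({s1, s2, s3, s4} : Finset (Fin k)).card ≤ 4 := by
      refine le_trans (Finset.card_insert_le _ _) ?_
      refine le_trans (Nat.add_le_add_right (Finset.card_insert_le _ _) 1) ?_
      refine le_trans (Nat.add_le_add_right (Nat.add_le_add_right (Finset.card_insert_le _ _) 1) 1) ?_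
      simp
    rw [Finset.card_univ, Fintype.card_fin] at h1
    omega
  have small3 : ∀ s1 s2 s3 : Fin k,
      (∀ u v, c u v = s1 ∨ c u v = s2 ∨ c u v = s3) → False := by
    intro s1 s2 s3 h
    exact small4 s1 s2 s3 s3 (fun u v => by rcases h u v with h | h | h <;> tauto)
  -- unified palettes over both sides
  set pal1 : Fin N ⊕ Fin N → Fin k := Sum.elim ra ca with hpal1
  set pal2 : Fin N ⊕ Fin N → Fin k := Sum.elim rb cb with hpal2
  have hpne : ∀ w, pal1 w ≠ pal2 w := by
    rintro (u | v) h
    · exact hrbne u h.symm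
    · exact hcbne v h.symm
  have hmeet : ∀ w1 w2, pal1 w1 = pal1 w2 ∨ pal1 w1 = pal2 w2 ∨
      pal2 w1 = pal1 w2 ∨ pal2 w1 = pal2 w2 := by
    rintro (u1 | v1) (u2 | v2)
    · -- row-row
      simp only [hpal1, hpal2, Sum.elim_inl]
      by_contra h
      push_neg at h
      obtain ⟨h1, h2, h3, h4⟩ := h
      refine small4 (ra u1) (rb u1) (ra u2) (rb u2) (fun u v => ?_)
      have hne12 : c u1 v ≠ c u2 v := by
        rcases Hrow' u1 v with e | e <;> rcases Hrow' u2 v with e' | e' <;>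
          rw [e, e'] <;> assumption
      have hkey : c u v = c u1 v ∨ c u v = c u2 v := by
        rcases Hcol' u1 v with g1 | g1 <;> rcases Hcol' u2 v with g2 | g2 <;>
          rcases Hcol' u v with f | f
        all_goals first
          | exact absurd (g1.trans g2.symm) hne12
          | exact Or.inl (f.trans g1.symm)
          | exact Or.inr (f.trans g2.symm)
      rcases hkey with hk' | hk'
      · rcases Hrow' u1 v with e | e
        · exact Or.inl (hk'.trans e)
        · exact Or.inr (Or.inl (hk'.trans e))
      · rcases Hrow' u2 v with e | e
        · exact Or.inr (Or.inr (Or.inl (hk'.trans e)))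
        · exact Or.inr (Or.inr (Or.inr (hk'.trans e)))
    · -- row-col
      simp only [hpal1, hpal2, Sum.elim_inl, Sum.elim_inr]
      rcases Hrow' u1 v2 with e | e <;> rcases Hcol' u1 v2 with f | f
      · exact Or.inl (e.symm.trans f)
      · exact Or.inr (Or.inl (e.symm.trans f))
      · exact Or.inr (Or.inr (Or.inl (e.symm.trans f)))
      · exact Or.inr (Or.inr (Or.inr (e.symm.trans f)))
    · -- col-row
      simp only [hpal1, hpal2, Sum.elim_inl, Sum.elim_inr]
      rcases Hrow' u2 v1 with e | e <;> rcases Hcol' u2 v1 with f | f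
      · exact Or.inl (f.symm.trans e)
      · exact Or.inr (Or.inr (Or.inl (f.symm.trans e)))
      · exact Or.inr (Or.inl (f.symm.trans e))
      · exact Or.inr (Or.inr (Or.inr (f.symm.trans e)))
    · -- col-col
      simp only [hpal1, hpal2, Sum.elim_inr]
      by_contra h
      push_neg at h
      obtain ⟨h1, h2, h3, h4⟩ := h
      refine small4 (ca v1) (cb v1) (ca v2) (cb v2) (fun u v => ?_)
      have hne12 : c u v1 ≠ c u v2 := by
        rcases Hcol' u v1 with e | e <;> rcases Hcol' u v2 with e' | e' <;>
          rw [e, e'] <;> assumption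
      have hkey : c u v = c u v1 ∨ c u v = c u v2 := by
        rcases Hrow' u v1 with g1 | g1 <;> rcases Hrow' u v2 with g2 | g2 <;>
          rcases Hrow' u v with f | f
        all_goals first
          | exact absurd (g1.trans g2.symm) hne12
          | exact Or.inl (f.trans g1.symm)
          | exact Or.inr (f.trans g2.symm)
      rcases hkey with hk' | hk'
      · rcases Hcol' u v1 with e | e
        · exact Or.inl (hk'.trans e)
        · exact Or.inr (Or.inl (hk'.trans e))
      · rcases Hcol' u v2 with e | e
        · exact Or.inr (Or.inr (Or.inl (hk'.trans e)))
        · exact Or.inr (Or.inr (Or.inr (hk'.trans e)))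
  -- find a common color
  set w0 : Fin N ⊕ Fin N := Sum.inl v0 with hw0
  set a : Fin k := pal1 w0 with ha
  set b : Fin k := pal2 w0 with hb
  have hab : a ≠ b := hpne w0
  have hcommon : ∃ x : Fin k, ∀ w, pal1 w = x ∨ pal2 w = x := by
    by_cases h1 : ∀ w, pal1 w = a ∨ pal2 w = a
    · exact ⟨a, h1⟩
    push_neg at h1
    obtain ⟨w2, hw2a, hw2a'⟩ := h1
    have hbw2 : pal1 w2 = b ∨ pal2 w2 = b := by
      rcases hmeet w0 w2 with h | h | h | h
      · exact absurd h.symm hw2a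
      · exact absurd h.symm hw2a'
      · exact Or.inl h.symm
      · exact Or.inr h.symm
    by_cases h2 : ∀ w, pal1 w = b ∨ pal2 w = b
    · exact ⟨b, h2⟩
    push_neg at h2
    obtain ⟨w3, hw3b, hw3b'⟩ := h2
    exfalso
    have haw3 : pal1 w3 = a ∨ pal2 w3 = a := by
      rcases hmeet w0 w3 with h | h | h | h
      · exact Or.inl h.symm
      · exact Or.inr h.symm
      · exact absurd h.symm hw3b
      · exact absurd h.symm hw3b'
    set d : Fin k := if pal1 w2 = b then pal2 w2 else pal1 w2 with hd
    have hw2pair : (pal1 w2 = b ∧ pal2 w2 = d) ∨ (pal1 w2 = d ∧ pal2 w2 = b) := by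
      rcases hbw2 with h | h
      · left; refine ⟨h, ?_⟩; rw [hd, if_pos h]
      · right
        have hne : pal1 w2 ≠ b := fun e => hpne w2 (e.trans h.symm)
        refine ⟨?_, h⟩; rw [hd, if_neg hne]
    have hda : d ≠ a := by
      rw [hd]; split_ifs
      · exact hw2a'
      · exact hw2a
    have hdb : d ≠ b := by
      rcases hw2pair with ⟨e1, e2⟩ | ⟨e1, e2⟩
      · exact fun e => hpne w2 (e1.trans (e2.trans e).symm)
      · exact fun e => hpne w2 (e1.trans (e.trans e2.symm))
    have hdw3 : pal1 w3 = d ∨ pal2 w3 = d := by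
      have m := hmeet w2 w3
      rcases hw2pair with ⟨e1, e2⟩ | ⟨e1, e2⟩ <;> rw [e1, e2] at m
      · rcases m with h | h | h | h
        · exact absurd h.symm hw3b
        · exact absurd h.symm hw3b'
        · exact Or.inl h.symm
        · exact Or.inr h.symm
      · rcases m with h | h | h | h
        · exact Or.inl h.symm
        · exact Or.inr h.symm
        · exact absurd h.symm hw3b
        · exact absurd h.symm hw3b'
    have hw3pair : (pal1 w3 = a ∧ pal2 w3 = d) ∨ (pal1 w3 = d ∧ pal2 w3 = a) := by
      rcases haw3 with h | h
      · left; refine ⟨h, ?_⟩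
        rcases hdw3 with h' | h'
        · exact absurd (h'.symm.trans h) hda
        · exact h'
      · right; refine ⟨?_, h⟩
        rcases hdw3 with h' | h'
        · exact h'
        · exact absurd (h'.symm.trans h) hda
    have key := key_lemma_s14 a b d hab hda hdb
    have hsub : ∀ w, (pal1 w = a ∨ pal1 w = b ∨ pal1 w = d) ∧
        (pal2 w = a ∨ pal2 w = b ∨ pal2 w = d) := by
      intro w
      have m1 := hmeet w0 w
      rw [← ha, ← hb] at m1
      have m2 : b = pal1 w ∨ b = pal2 w ∨ d = pal1 w ∨ d = pal2 w := by
        have m := hmeet w2 w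
        rcases hw2pair with ⟨e1, e2⟩ | ⟨e1, e2⟩ <;> rw [e1, e2] at m <;>
          rcases m with h | h | h | h <;>
          first
            | exact Or.inl h
            | exact Or.inr (Or.inl h)
            | exact Or.inr (Or.inr (Or.inl h))
            | exact Or.inr (Or.inr (Or.inr h))
      have m3 : a = pal1 w ∨ a = pal2 w ∨ d = pal1 w ∨ d = pal2 w := by
        have m := hmeet w3 w
        rcases hw3pair with ⟨e1, e2⟩ | ⟨e1, e2⟩ <;> rw [e1, e2] at m <;>
          rcases m with h | h | h | h <;>
          first
            | exact Or.inl h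
            | exact Or.inr (Or.inl h)
            | exact Or.inr (Or.inr (Or.inl h))
            | exact Or.inr (Or.inr (Or.inr h))
      exact key (pal1 w) (pal2 w) m1 m2 m3
    refine small3 a b d (fun u v => ?_)
    have hu := hsub (Sum.inl u)
    simp only [hpal1, hpal2, Sum.elim_inl] at hu
    rcases Hrow' u v with e | e
    · rcases hu.1 with h | h | h
      · exact Or.inl (e.trans h)
      · exact Or.inr (Or.inl (e.trans h))
      · exact Or.inr (Or.inr (e.trans h))
    · rcases hu.2 with h | h | h
      · exact Or.inl (e.trans h)
      · exact Or.inr (Or.inl (e.trans h))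
      · exact Or.inr (Or.inr (e.trans h))
  obtain ⟨x, hx⟩ := hcommon
  have hxr : ∀ u : Fin N, ra u = x ∨ rb u = x := by
    intro u
    have h := hx (Sum.inl u)
    simpa only [hpal1, hpal2, Sum.elim_inl] using h
  have hxc : ∀ v : Fin N, ca v = x ∨ cb v = x := by
    intro v
    have h := hx (Sum.inr v)
    simpa only [hpal1, hpal2, Sum.elim_inr] using h
  set s : Fin N → Fin k := fun u => if ra u = x then rb u else ra u with hsdef
  set s' : Fin N → Fin k := fun v => if ca v = x then cb v else ca v with hs'def
  have hsne : ∀ u, s u ≠ x := by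
    intro u
    rw [hsdef]
    simp only
    split_ifs with h
    · exact fun e => hrbne u (e.trans h.symm)
    · exact h
  have hs'ne : ∀ v, s' v ≠ x := by
    intro v
    rw [hs'def]
    simp only
    split_ifs with h
    · exact fun e => hcbne v (e.trans h.symm)
    · exact h
  have hscov : ∀ u v, c u v = x ∨ c u v = s u := by
    intro u v
    have hsu : s u = rb u ∨ s u = ra u := by
      rw [hsdef]; simp only; split_ifs <;> simp
    rcases Hrow' u v with e | e
    · by_cases h : ra u = x
      · exact Or.inl (e.trans h)
      · right
        rw [e, hsdef]
        simp only [if_neg h]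
    · by_cases h : ra u = x
      · right
        rw [e, hsdef]
        simp only [if_pos h]
      · rcases hxr u with h' | h'
        · exact absurd h' h
        · exact Or.inl (e.trans h')
  have hscov' : ∀ u v, c u v = x ∨ c u v = s' v := by
    intro u v
    rcases Hcol' u v with e | e
    · by_cases h : ca v = x
      · exact Or.inl (e.trans h)
      · right
        rw [e, hs'def]
        simp only [if_neg h]
    · by_cases h : ca v = x
      · right
        rw [e, hs'def]
        simp only [if_pos h]
      · rcases hxc v with h' | h'
        · exact absurd h' h
        · exact Or.inl (e.trans h')
  -- each column has many cells of its non-x color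
  have hcolcnt : ∀ v : Fin N, N + 1 - t ≤ (univ.filter fun u => c u v = s' v).card := by
    intro v
    have hsub2 : (univ : Finset (Fin N)) ⊆
        (univ.filter fun u => c u v = x) ∪ (univ.filter fun u => c u v = s' v) := by
      intro u _
      rw [Finset.mem_union, Finset.mem_filter, Finset.mem_filter]
      rcases hscov' u v with e | e
      · exact Or.inl ⟨Finset.mem_univ u, e⟩
      · exact Or.inr ⟨Finset.mem_univ u, e⟩
    have h1 := Finset.card_le_card hsub2
    have h2 := Finset.card_union_le (univ.filter fun u => c u v = x)
      (univ.filter fun u => c u v = s' v)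
    have h3 := hmonoCol v x
    rw [Finset.card_univ, Fintype.card_fin] at h1
    omega
  have hforce : ∀ u v, c u v = s' v → s u = s' v := by
    intro u v e
    have hne : c u v ≠ x := by rw [e]; exact hs'ne v
    rcases hscov u v with f | f
    · exact absurd f hne
    · exact f.symm.trans e
  have hfiber : ∀ y : Fin k, y ≠ x → N + 1 - t ≤ (univ.filter fun u => s u = y).card := by
    intro y hy
    obtain ⟨u1, v1, huv⟩ := hsurj y
    have hs'v1 : s' v1 = y := by
      have hne : c u1 v1 ≠ x := by rw [huv]; exact hy
      rcases hscov' u1 v1 with f | f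
      · exact absurd f hne
      · exact f.symm.trans huv
    have hsub3 : (univ.filter fun u => c u v1 = s' v1) ⊆ (univ.filter fun u => s u = y) := by
      intro u hu
      rw [Finset.mem_filter] at hu ⊢
      exact ⟨hu.1, (hforce u v1 hu.2).trans hs'v1⟩
    exact le_trans (hcolcnt v1) (Finset.card_le_card hsub3)
  have hsum : (univ : Finset (Fin N)).card =
      ∑ y ∈ (univ : Finset (Fin k)), ((univ : Finset (Fin N)).filter fun u => s u = y).card :=
    Finset.card_eq_sum_card_fiberwise (fun u _ => Finset.mem_univ (s u))
  have hbig : ((univ : Finset (Fin k)).erase x).card • (N + 1 - t) ≤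
      ∑ y ∈ (univ : Finset (Fin k)).erase x,
        ((univ : Finset (Fin N)).filter fun u => s u = y).card :=
    Finset.card_nsmul_le_sum _ _ _ (fun y hy => hfiber y (Finset.ne_of_mem_erase hy))
  have hsub4 : ∑ y ∈ (univ : Finset (Fin k)).erase x,
      ((univ : Finset (Fin N)).filter fun u => s u = y).card ≤
      ∑ y ∈ (univ : Finset (Fin k)),
      ((univ : Finset (Fin N)).filter fun u => s u = y).card :=
    Finset.sum_le_sum_of_subset (Finset.erase_subset _ _)
  rw [Finset.card_erase_of_mem (Finset.mem_univ x), Finset.card_univ, Fintype.card_fin,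
    smul_eq_mul] at hbig
  rw [Finset.card_univ, Fintype.card_fin] at hsum
  have hfin : (k - 1) * (N + 1 - t) ≤ N := by omega
  obtain ⟨m, hm⟩ : ∃ m, N = t + 1 + m := ⟨N - (t + 1), by omega⟩
  obtain ⟨a', ha'⟩ : ∃ a', t = a' + 5 := ⟨t - 5, by omega⟩
  have e1 : N + 1 - t = m + 2 := by omega
  have e2 : a' + 4 ≤ k - 1 := by omega
  have h5 : (a' + 4) * (m + 2) ≤ (k - 1) * (N + 1 - t) := by
    rw [e1]; exact Nat.mul_le_mul_right _ e2
  nlinarith [h5, hfin, hm, ha']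

lemma lower_aux (k t : ℕ) (ht : 5 ≤ t) (hk1 : t ≤ k) (hk2 : k ≤ t + 1) :
    ∃ c : Fin t → Fin t → Fin k, (∀ i : Fin k, ∃ u v, c u v = i) ∧
      ¬ hasRainbowK13 c ∧ ¬ hasMonoKst c 1 t := by
  have hk0 : 0 < k := by omega
  have hk1' : 1 < k := by omega
  set zero : Fin k := ⟨0, hk0⟩ with hzero
  set one : Fin k := ⟨1, hk1'⟩ with hone
  set last : Fin k := ⟨k - 1, by omega⟩ with hlast
  set d : Fin t → Fin k := fun u =>
    if u.val = 0 then one else if u.val = 1 then last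
    else ⟨u.val, lt_of_lt_of_le u.isLt hk1⟩ with hd
  set c : Fin t → Fin t → Fin k := fun u v => if u.val = v.val then d u else zero with hc
  have hd0 : ∀ u, d u ≠ zero := by
    intro u e
    rw [hd] at e
    simp only at e
    split_ifs at e with h1 h2 <;> rw [Fin.ext_iff] at e <;> simp [hzero, hone, hlast] at e <;>
      omega
  have hcd : ∀ u v, c u v = zero ∨ (u = v ∧ c u v = d u) := by
    intro u v
    rw [hc]
    simp only
    split_ifs with h
    · exact Or.inr ⟨Fin.ext h, rfl⟩
    · exact Or.inl rfl
  have hcd' : ∀ u v, c u v = zero ∨ c u v = d v := by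
    intro u v
    rcases hcd u v with h | ⟨e, h⟩
    · exact Or.inl h
    · subst e; exact Or.inr h
  have hcdrow : ∀ u v, c u v = zero ∨ c u v = d u := by
    intro u v
    rcases hcd u v with h | ⟨_, h⟩
    · exact Or.inl h
    · exact Or.inr h
  refine ⟨c, ?_, ?_, ?_⟩
  · -- surjectivity
    intro i
    by_cases h0 : i.val = 0
    · refine ⟨⟨0, by omega⟩, ⟨1, by omega⟩, ?_⟩
      rw [hc]
      simp only [Fin.ext_iff, hzero]
      simp
      omega
    by_cases h1 : i.val = 1
    · refine ⟨⟨0, by omega⟩, ⟨0, by omega⟩, ?_⟩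
      rw [hc, hd]
      simp only [Fin.ext_iff, hone]
      simp
      omega
    by_cases hl : i.val = k - 1
    · refine ⟨⟨1, by omega⟩, ⟨1, by omega⟩, ?_⟩
      rw [hc, hd]
      simp only [Fin.ext_iff, hlast]
      simp
      omega
    · have hit : i.val < t := by
        have := i.isLt
        omega
      refine ⟨⟨i.val, hit⟩, ⟨i.val, hit⟩, ?_⟩
      rw [hc, hd]
      simp only [Fin.ext_iff]
      simp [h0, h1]
  · -- no rainbow K13
    rintro (⟨u, v1, v2, v3, h12, h13, h23⟩ | ⟨v, u1, u2, u3, h12, h13, h23⟩)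
    · rcases hcdrow u v1 with e1 | e1 <;> rcases hcdrow u v2 with e2 | e2 <;>
        rcases hcdrow u v3 with e3 | e3 <;> rw [e1] at h12 h13 <;> rw [e2] at h12 h23 <;>
        rw [e3] at h13 h23 <;> first | exact h12 rfl | exact h13 rfl | exact h23 rfl
    · rcases hcd' u1 v with e1 | e1 <;> rcases hcd' u2 v with e2 | e2 <;>
        rcases hcd' u3 v with e3 | e3 <;> rw [e1] at h12 h13 <;> rw [e2] at h12 h23 <;>
        rw [e3] at h13 h23 <;> first | exact h12 rfl | exact h13 rfl | exact h23 rfl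
  · -- no mono K_{1,t}
    rintro ⟨i, S, T, hcard | hcard, hall⟩
    · obtain ⟨u, hu⟩ := Finset.card_eq_one.mp hcard.1
      have hT : T = univ := Finset.eq_univ_of_card T (by rw [hcard.2]; simp)
      have hmem : ∀ v, c u v = i := fun v => hall u (by simp [hu]) v (by simp [hT])
      have hdiag : c u u = d u := by rw [hc]; simp
      by_cases h0 : u.val = 0
      · have hoff : c u ⟨1, by omega⟩ = zero := by rw [hc]; simp [h0]
        exact hd0 u ((hdiag.symm.trans (hmem u)).trans ((hmem _).symm.trans hoff))
      · have hoff : c u ⟨0, by omega⟩ = zero := by rw [hc]; simp [h0]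
        exact hd0 u ((hdiag.symm.trans (hmem u)).trans ((hmem _).symm.trans hoff))
    · obtain ⟨v, hv⟩ := Finset.card_eq_one.mp hcard.2
      have hS : S = univ := Finset.eq_univ_of_card S (by rw [hcard.1]; simp)
      have hmem : ∀ u, c u v = i := fun u => hall u (by simp [hS]) v (by simp [hv])
      have hdiag : c v v = d v := by rw [hc]; simp
      by_cases h0 : v.val = 0
      · have hoff : c ⟨1, by omega⟩ v = zero := by
          rw [hc]; simp only; rw [if_neg (by simp [h0])]
        exact hd0 v ((hdiag.symm.trans (hmem v)).trans ((hmem _).symm.trans hoff))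
      · have hoff : c ⟨0, by omega⟩ v = zero := by
          rw [hc]; simp only; rw [if_neg (Ne.symm h0)]
        exact hd0 v ((hdiag.symm.trans (hmem v)).trans ((hmem _).symm.trans hoff))

/-- for `t ≥ 5` and `t ≤ k ≤ t + 1`, `bgr_k(K_{1,3} : K_{1,t}) = t + 1`. -/
theorem stmt14 (k t : ℕ) (ht : 5 ≤ t) (hk1 : t ≤ k) (hk2 : k ≤ t + 1) :
    bgrK13K1t k t (t + 1) ∧
    (∀ n : ℕ, bgrK13K1t k t n → t + 1 ≤ n) := by
  constructor
  · refine ⟨by nlinarith, ?_⟩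
    intro N hN c hsurj
    by_contra hcon
    push_neg at hcon
    exact upper_aux k t N ht hk1 hN c hsurj hcon.1 hcon.2
  · intro n hn
    by_contra hlt
    push_neg at hlt
    obtain ⟨c, hsurj, hrb, hmono⟩ := lower_aux k t ht hk1 hk2
    rcases hn.2 t (by omega) c hsurj with h | h
    · exact hrb h
    · exact hmono h
end
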